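/- arXiv:1305.1260 — 6 statements merged into one kernel-verified Lean document; each statement's English description precedes it below -/
import Mathlib

section
/- The unitary subgroup 𝒰_*(FD_{2p}) of the group algebra FD_{2p} is the internal semidirect product of the normal subgroup V_*(FA) with the elementary abelian 2-group generated by b and −1: V_*(FA) is normal in 𝒰_*(FD_{2p}), every unitary unit of FD_{2p} is uniquely a product of an element of V_*(FA) with an element of ⟨b⟩ × ⟨−1⟩, and V_*(FA) ∩ (⟨b⟩ × ⟨−1⟩) = {1}. -/
noncomputable section

open MonoidAlgebra

abbrev Dg (p : ℕ) := DihedralGroup p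

def aa (p : ℕ) : Dg p := DihedralGroup.r 1
def bb (p : ℕ) : Dg p := DihedralGroup.sr 0

abbrev FG (p : ℕ) (F : Type) [Field F] := MonoidAlgebra F (Dg p)

/-- The cyclic subgroup `A = ⟨a⟩` of the dihedral group. -/
def Asub (p : ℕ) : Subgroup (Dg p) := Subgroup.zpowers (aa p)

/-- `Γ(A)` : the ideal of `FD_{2p}` generated by `{h - 1 : h ∈ A}`. -/
def gammaA (p : ℕ) (F : Type) [Field F] : Ideal (FG p F) :=
  Ideal.span ((fun h => (MonoidAlgebra.of F (Dg p) h : FG p F) - 1) '' (Asub p : Set (Dg p)))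

/-- The set `1 + Γ(A)`. -/
def oneGamma (p : ℕ) (F : Type) [Field F] : Set (FG p F) :=
  {x | x - 1 ∈ gammaA p F}

/-- The canonical involution `Σ x_g g ↦ Σ x_g g⁻¹`. -/
def invo (p : ℕ) (F : Type) [Field F] (x : FG p F) : FG p F :=
  MonoidAlgebra.ofCoeff (Finsupp.equivMapDomain (Equiv.inv (Dg p)) x.coeff)

/-- An element is a unitary unit if `x* = x⁻¹`. -/
def IsUnitary (p : ℕ) (F : Type) [Field F] (x : FG p F) : Prop :=
  x * invo p F x = 1 ∧ invo p F x * x = 1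

/-- The set of unitary units of `FD_{2p}`. -/
def unitarySet (p : ℕ) (F : Type) [Field F] : Set (FG p F) := {x | IsUnitary p F x}

/-- The augmentation map. -/
def aug (p : ℕ) (F : Type) [Field F] (x : FG p F) : F := x.coeff.sum fun _ c => c

/-- Membership in the group algebra `FA` of the subgroup `A`, viewed inside `FD_{2p}`. -/
def memFA (p : ℕ) (F : Type) [Field F] (x : FG p F) : Prop := ∀ g ∈ x.coeff.support, g ∈ Asub p

/-- `V_*(FA)`: unitary units of augmentation 1 supported on `A`. -/
def VstarFA (p : ℕ) (F : Type) [Field F] : Set (FG p F) :=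
  {x | memFA p F x ∧ aug p F x = 1 ∧ IsUnitary p F x}

/-- `S_*(FA)`: symmetric units of augmentation 1 supported on `A`. -/
def SstarFA (p : ℕ) (F : Type) [Field F] : Set (FG p F) :=
  {x | memFA p F x ∧ aug p F x = 1 ∧ IsUnit x ∧ invo p F x = x}

open DihedralGroup Finsupp

variable {p : ℕ} {F : Type} [Field F]

lemma r_mem_Asub (i : ZMod p) [NeZero p] : r i ∈ Asub p := by
  refine ⟨(i.val : ℤ), ?_⟩
  show (r 1) ^ (i.val : ℤ) = r i
  rw [zpow_natCast, r_one_pow]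
  simp [ZMod.natCast_val, ZMod.cast_id]

lemma mem_Asub_iff [NeZero p] {g : Dg p} : g ∈ Asub p ↔ ∃ i, g = r i := by
  constructor
  · rintro ⟨k, rfl⟩
    induction k using Int.induction_on with
    | zero => exact ⟨0, rfl⟩
    | succ n ih =>
      obtain ⟨i, hi⟩ := ih
      refine ⟨i + 1, ?_⟩
      show (aa p : Dg p) ^ ((n : ℤ) + 1) = r (i + 1)
      rw [zpow_add, zpow_one]
      have hi' : (aa p : Dg p) ^ (n : ℤ) = r i := hi
      rw [hi']; rfl
    | pred n ih =>
      obtain ⟨i, hi⟩ := ih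
      refine ⟨i - 1, ?_⟩
      show (aa p : Dg p) ^ (-(n : ℤ) - 1) = r (i - 1)
      have h2 : (-(n : ℤ) - 1) = -(n:ℤ) + (-1) := by ring
      rw [h2, zpow_add, zpow_neg_one]
      have hi' : (aa p : Dg p) ^ (-(n : ℤ)) = r i := hi
      rw [hi']
      show r i * (r 1)⁻¹ = _
      have : (r 1 : Dg p)⁻¹ = r (-1) := rfl
      rw [this, r_mul_r]; congr 1; ring
  · rintro ⟨i, rfl⟩; exact r_mem_Asub i

lemma sr_not_mem_Asub (j : ZMod p) [NeZero p] : sr j ∉ Asub p := by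
  rw [mem_Asub_iff]; rintro ⟨i, h⟩; exact absurd h (by simp)

-- invo basics
lemma invo_apply (x : FG p F) (g : Dg p) : (invo p F x).coeff g = x.coeff g⁻¹ := rfl

lemma invo_add (x y : FG p F) : invo p F (x + y) = invo p F x + invo p F y := by
  ext g
  simp only [invo_apply, MonoidAlgebra.coeff_add, Finsupp.add_apply]

lemma invo_neg (x : FG p F) : invo p F (-x) = - invo p F x := by
  ext g
  simp only [invo_apply, MonoidAlgebra.coeff_neg, Finsupp.neg_apply]

lemma invo_single (g : Dg p) (c : F) :
    invo p F (MonoidAlgebra.single g c) = MonoidAlgebra.single g⁻¹ c := by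
  show MonoidAlgebra.ofCoeff (Finsupp.equivMapDomain _ (Finsupp.single g c)) = _
  rw [Finsupp.equivMapDomain_single]; rfl

lemma invo_invo (x : FG p F) : invo p F (invo p F x) = x := by
  ext g; simp [invo_apply]

lemma invo_one : invo p F 1 = 1 := by
  show invo p F (MonoidAlgebra.single 1 1) = _
  rw [invo_single, inv_one]; rfl

lemma invo_mul (x y : FG p F) : invo p F (x * y) = invo p F y * invo p F x := by
  induction x using MonoidAlgebra.induction_linear with
  | zero => rw [zero_mul, show invo p F 0 = 0 from rfl, mul_zero]
  | add f g hf hg => rw [add_mul, invo_add, invo_add, hf, hg, mul_add]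
  | single a b =>
    induction y using MonoidAlgebra.induction_linear with
    | zero =>
      rw [mul_zero, show invo p F 0 = 0 from rfl, zero_mul]
    | add f g hf hg => rw [mul_add, invo_add, invo_add, hf, hg, add_mul]
    | single c d =>
      show invo p F (MonoidAlgebra.single a b * MonoidAlgebra.single c d) = _
      rw [MonoidAlgebra.single_mul_single, invo_single, invo_single, invo_single,
        MonoidAlgebra.single_mul_single, mul_inv_rev, mul_comm d b]

-- aug basics
lemma aug_single (g : Dg p) (c : F) : aug p F (MonoidAlgebra.single g c) = c := by
  unfold aug
  rw [MonoidAlgebra.coeff_single]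
  exact Finsupp.sum_single_index rfl

lemma aug_add (x y : FG p F) : aug p F (x + y) = aug p F x + aug p F y := by
  unfold aug
  rw [MonoidAlgebra.coeff_add]
  exact Finsupp.sum_add_index' (fun _ => rfl) (fun _ _ _ => rfl)

lemma aug_eq_lift (x : FG p F) :
    aug p F x = MonoidAlgebra.lift F F (Dg p) 1 x := by
  rw [MonoidAlgebra.lift_apply]
  unfold aug
  congr 1
  funext a b
  simp

lemma aug_mul (x y : FG p F) : aug p F (x * y) = aug p F x * aug p F y := by
  rw [aug_eq_lift, aug_eq_lift, aug_eq_lift, map_mul]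

lemma aug_one : aug p F 1 = 1 := by
  show aug p F (MonoidAlgebra.single 1 1) = 1
  exact aug_single _ _

lemma aug_neg (x : FG p F) : aug p F (-x) = - aug p F x := by
  rw [aug_eq_lift, aug_eq_lift, map_neg]

lemma aug_invo (x : FG p F) : aug p F (invo p F x) = aug p F x := by
  unfold aug invo
  exact Finsupp.sum_equivMapDomain (Equiv.inv (Dg p)) x.coeff (fun _ c => c)

-- memFA basics
lemma memFA_zero : memFA p F 0 := by intro g hg; simp at hg

lemma memFA_add {x y : FG p F} (hx : memFA p F x) (hy : memFA p F y) :
    memFA p F (x + y) := by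
  intro g hg
  rw [MonoidAlgebra.coeff_add] at hg
  rcases Finset.mem_union.mp (Finsupp.support_add hg) with h | h
  · exact hx g h
  · exact hy g h

lemma memFA_neg {x : FG p F} (hx : memFA p F x) : memFA p F (-x) := by
  intro g hg
  rw [MonoidAlgebra.coeff_neg, Finsupp.support_neg] at hg
  exact hx g hg

lemma memFA_single {g : Dg p} (hg : g ∈ Asub p) (c : F) :
    memFA p F (MonoidAlgebra.single g c) := by
  intro h hh
  rw [MonoidAlgebra.coeff_single] at hh
  have := Finsupp.support_single_subset hh
  simp at this
  rwa [this]

lemma memFA_one : memFA p F 1 := memFA_single (one_mem _) 1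

lemma memFA_mul {x y : FG p F} (hx : memFA p F x) (hy : memFA p F y) :
    memFA p F (x * y) := by
  intro g hg
  obtain ⟨a, ha, b, hb, rfl⟩ := Finset.mem_mul.mp (MonoidAlgebra.support_coeff_mul_subset x y hg)
  exact mul_mem (hx a ha) (hy b hb)

lemma memFA_invo {x : FG p F} (hx : memFA p F x) : memFA p F (invo p F x) := by
  intro g hg
  have : x.coeff g⁻¹ ≠ 0 := by
    rw [← invo_apply]
    exact Finsupp.mem_support_iff.mp hg
  have := hx g⁻¹ (Finsupp.mem_support_iff.mpr this)
  simpa using inv_mem this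

/-- Induction principle for elements supported on `A`. -/
lemma memFA_induction {M : FG p F → Prop} (h0 : M 0)
    (hstep : ∀ (g : Dg p) (c : F) (f : FG p F), g ∈ Asub p → memFA p F f → M f →
      M (MonoidAlgebra.single g c + f)) :
    ∀ x : FG p F, memFA p F x → M x := by
  intro x
  induction x using MonoidAlgebra.induction with
  | zero => intro _; exact h0
  | single_add a b f ha hb ih =>
    intro hmem
    have hbne : (MonoidAlgebra.single a b + f).coeff a ≠ 0 := by
      rw [MonoidAlgebra.coeff_add, Finsupp.add_apply, MonoidAlgebra.coeff_single, Finsupp.single_eq_same, Finsupp.notMem_support_iff.mp ha, add_zero]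
      exact hb
    have haA : a ∈ Asub p := hmem a (Finsupp.mem_support_iff.mpr hbne)
    have hf : memFA p F f := by
      intro g hg
      have hga : g ≠ a := fun h => ha (h ▸ hg)
      have : (MonoidAlgebra.single a b + f).coeff g ≠ 0 := by
        rw [MonoidAlgebra.coeff_add, Finsupp.add_apply, MonoidAlgebra.coeff_single, Finsupp.single_eq_of_ne' (Ne.symm hga), zero_add]
        exact Finsupp.mem_support_iff.mp hg
      exact hmem g (Finsupp.mem_support_iff.mpr this)
    exact hstep a b f haA hf (ih hf)
lemma single_commute_memFA [NeZero p] (i : ZMod p) (c : F) {y : FG p F} (hy : memFA p F y) :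
    (MonoidAlgebra.single (r i) c : FG p F) * y = y * MonoidAlgebra.single (r i) c := by
  refine memFA_induction (M := fun y => (MonoidAlgebra.single (r i) c : FG p F) * y = y * MonoidAlgebra.single (r i) c) ?_ ?_ y hy
  · show MonoidAlgebra.single (r i) c * 0 = 0 * MonoidAlgebra.single (r i) c
    rw [zero_mul, mul_zero]
  · intro g' c' f' hg' hf' ih'
    show MonoidAlgebra.single (r i) c * (MonoidAlgebra.single g' c' + f') = _
    rw [add_mul, mul_add, ih']
    congr 1
    obtain ⟨j, rfl⟩ := mem_Asub_iff.mp hg'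
    show MonoidAlgebra.single _ c * MonoidAlgebra.single _ c' = _
    rw [MonoidAlgebra.single_mul_single, MonoidAlgebra.single_mul_single,
      r_mul_r, r_mul_r, add_comm i j, mul_comm c c']

lemma memFA_commute [NeZero p] {x y : FG p F} (hx : memFA p F x) (hy : memFA p F y) :
    x * y = y * x := by
  refine memFA_induction (M := fun x => x * y = y * x) ?_ ?_ x hx
  · show (0 : FG p F) * y = y * 0
    rw [zero_mul, mul_zero]
  · intro g c f hg hf ih
    show (MonoidAlgebra.single g c + f) * y = y * (MonoidAlgebra.single g c + f)
    rw [add_mul, mul_add, ih]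
    congr 1
    obtain ⟨i, rfl⟩ := mem_Asub_iff.mp hg
    exact single_commute_memFA i c hy

instance instCharPFG [CharP F p] : CharP (FG p F) p :=
  charP_of_injective_algebraMap' F p

lemma r_pow_p [NeZero p] (i : ZMod p) : (r i : Dg p) ^ p = 1 := by
  have h : (r i : Dg p) = (r 1) ^ (i.val) := by
    rw [r_one_pow]
    congr 1
    simp [ZMod.natCast_val, ZMod.cast_id]
  rw [h, ← pow_mul, mul_comm, pow_mul, r_one_pow_n, one_pow]

lemma memFA_pow_p (hp : p.Prime) [CharP F p] {x : FG p F} (hx : memFA p F x) :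
    x ^ p = (aug p F x) ^ p • (1 : FG p F) := by
  haveI : Fact p.Prime := ⟨hp⟩
  haveI : NeZero p := ⟨hp.ne_zero⟩
  refine memFA_induction (M := fun x => x ^ p = (aug p F x) ^ p • (1 : FG p F)) ?_ ?_ x hx
  · show (0 : FG p F) ^ p = (aug p F 0) ^ p • (1 : FG p F)
    have : aug p F (0 : FG p F) = 0 := by simp [aug]
    rw [this, zero_pow hp.ne_zero, zero_pow hp.ne_zero, zero_smul]
  · intro g c f hg hf ih
    show (MonoidAlgebra.single g c + f) ^ p = _
    have hcomm : Commute (MonoidAlgebra.single g c : FG p F) f :=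
      memFA_commute (memFA_single hg c) hf
    rw [add_pow_char_of_commute p hcomm, MonoidAlgebra.single_pow, ih]
    obtain ⟨i, rfl⟩ := mem_Asub_iff.mp hg
    rw [r_pow_p, aug_add, aug_single]
    have h1 : (MonoidAlgebra.single (1 : Dg p) (c ^ p) : FG p F) = (c ^ p) • 1 := by
      rw [MonoidAlgebra.one_def, MonoidAlgebra.smul_single', mul_one]
    rw [h1, add_pow_char (p := p), add_smul]

/-- If `x` is supported on `A` and has nonzero augmentation, it has a two-sided inverse. -/
lemma memFA_inv (hp : p.Prime) [CharP F p] {x : FG p F} (hx : memFA p F x)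
    (hne : aug p F x ≠ 0) : ∃ z : FG p F, x * z = 1 ∧ z * x = 1 := by
  haveI : NeZero p := ⟨hp.ne_zero⟩
  refine ⟨((aug p F x) ^ p)⁻¹ • x ^ (p - 1), ?_, ?_⟩
  · rw [mul_smul_comm, ← pow_succ']
    have hps : p - 1 + 1 = p := Nat.succ_pred_eq_of_pos hp.pos
    rw [hps, memFA_pow_p hp hx, smul_smul, inv_mul_cancel₀ (pow_ne_zero _ hne), one_smul]
  · rw [smul_mul_assoc, ← pow_succ]
    have hps : p - 1 + 1 = p := Nat.succ_pred_eq_of_pos hp.pos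
    rw [hps, memFA_pow_p hp hx, smul_smul, inv_mul_cancel₀ (pow_ne_zero _ hne), one_smul]

lemma memFA_mul_eq_zero (hp : p.Prime) [CharP F p] {x y : FG p F} (hx : memFA p F x)
    (hne : aug p F x ≠ 0) (h : x * y = 0) : y = 0 := by
  obtain ⟨z, hz1, hz2⟩ := memFA_inv hp hx hne
  calc y = (z * x) * y := by rw [hz2, one_mul]
  _ = z * (x * y) := by rw [mul_assoc]
  _ = 0 := by rw [h, mul_zero]

/-! ### The `A`/`B` decomposition -/

def isA {p : ℕ} : Dg p → Bool := fun g => match g with | .r _ => true | .sr _ => false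

def memB (p : ℕ) (F : Type) [Field F] (x : FG p F) : Prop := ∀ g ∈ x.coeff.support, g ∉ Asub p

lemma isA_iff [NeZero p] {g : Dg p} : isA g = true ↔ g ∈ Asub p := by
  cases g with
  | r i => simpa [isA] using r_mem_Asub i
  | sr j => simpa [isA] using sr_not_mem_Asub j

def partA (p : ℕ) (F : Type) [Field F] (x : FG p F) : FG p F :=
  MonoidAlgebra.ofCoeff (Finsupp.filter (fun g => isA g = true) x.coeff)

def partB (p : ℕ) (F : Type) [Field F] (x : FG p F) : FG p F :=
  MonoidAlgebra.ofCoeff (Finsupp.filter (fun g => ¬ isA g = true) x.coeff)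

lemma partA_add_partB (x : FG p F) : partA p F x + partB p F x = x :=
  congrArg MonoidAlgebra.ofCoeff (Finsupp.filter_pos_add_filter_neg x.coeff _)

lemma memFA_partA [NeZero p] (x : FG p F) : memFA p F (partA p F x) := by
  intro g hg
  rw [partA, MonoidAlgebra.coeff_ofCoeff, Finsupp.support_filter, Finset.mem_filter] at hg
  exact isA_iff.mp hg.2

lemma memB_partB [NeZero p] (x : FG p F) : memB p F (partB p F x) := by
  intro g hg
  rw [partB, MonoidAlgebra.coeff_ofCoeff, Finsupp.support_filter, Finset.mem_filter] at hg
  exact fun hmem => hg.2 (isA_iff.mpr hmem)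

lemma memFA_memB_eq_zero {z : FG p F} (h1 : memFA p F z) (h2 : memB p F z) : z = 0 := by
  rw [← MonoidAlgebra.coeff_inj, MonoidAlgebra.coeff_zero, ← Finsupp.support_eq_empty, Finset.eq_empty_iff_forall_notMem]
  exact fun g hg => h2 g hg (h1 g hg)

/-- `β = b` as an element of the group algebra. -/
def bB (p : ℕ) (F : Type) [Field F] : FG p F := MonoidAlgebra.single (bb p) 1

lemma bb_mul_bb : (bb p) * bb p = 1 := by
  show sr 0 * sr 0 = 1
  rw [sr_mul_sr, sub_zero, one_def]

lemma bb_inv : (bb p)⁻¹ = bb p := inv_eq_of_mul_eq_one_right bb_mul_bb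

lemma beta_sq : bB p F * bB p F = 1 := by
  rw [bB, MonoidAlgebra.single_mul_single, mul_one, bb_mul_bb, MonoidAlgebra.one_def]

lemma mul_beta_apply (f : FG p F) (g : Dg p) : (f * bB p F).coeff g = f.coeff (g * bb p) := by
  rw [bB, MonoidAlgebra.coeff_mul_single_apply, mul_one, bb_inv]

lemma mul_beta_cancel (f : FG p F) : (f * bB p F) * bB p F = f := by
  rw [mul_assoc, beta_sq, mul_one]

lemma memFA_mul_beta [NeZero p] {z : FG p F} (hz : memB p F z) : memFA p F (z * bB p F) := by
  intro g hg
  have hval : z.coeff (g * bb p) ≠ 0 := by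
    rw [← mul_beta_apply]; exact Finsupp.mem_support_iff.mp hg
  have hmem := hz _ (Finsupp.mem_support_iff.mpr hval)
  cases g with
  | r i => exact r_mem_Asub i
  | sr j =>
    exfalso
    apply hmem
    show sr j * sr 0 ∈ _
    rw [sr_mul_sr]
    exact r_mem_Asub _
  
lemma memB_mul_beta [NeZero p] {z : FG p F} (hz : memFA p F z) : memB p F (z * bB p F) := by
  intro g hg
  have hval : z.coeff (g * bb p) ≠ 0 := by
    rw [← mul_beta_apply]; exact Finsupp.mem_support_iff.mp hg
  have hmem := hz _ (Finsupp.mem_support_iff.mpr hval)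
  cases g with
  | sr j => exact sr_not_mem_Asub j
  | r i =>
    exfalso
    have heq : (r i : Dg p) * bb p = sr (0 - i) := by
      show r i * sr 0 = sr (0 - i)
      rw [r_mul_sr]
    rw [heq] at hmem
    exact sr_not_mem_Asub _ hmem

/-- Splitting an identity `s + t·β = s' + t'·β` with all of `s,t,s',t'` in `FA`. -/
lemma split_eq [NeZero p] {s t s' t' : FG p F} (hs : memFA p F s) (ht : memFA p F t)
    (hs' : memFA p F s') (ht' : memFA p F t')
    (h : s + t * bB p F = s' + t' * bB p F) : s = s' ∧ t = t' := by
  have h1 : s - s' = (t' - t) * bB p F := by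
    rw [sub_mul]
    calc s - s' = (s + t * bB p F) - t * bB p F - s' := by abel
    _ = (s' + t' * bB p F) - t * bB p F - s' := by rw [h]
    _ = t' * bB p F - t * bB p F := by abel
  have h2 : memFA p F (s - s') := by
    rw [sub_eq_add_neg]; exact memFA_add hs (memFA_neg hs')
  have h3 : memB p F ((t' - t) * bB p F) := by
    apply memB_mul_beta
    rw [sub_eq_add_neg]; exact memFA_add ht' (memFA_neg ht)
  have h4 : s - s' = 0 := memFA_memB_eq_zero h2 (h1 ▸ h3)
  have h5 : (t' - t) * bB p F = 0 := by rw [← h1, h4]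
  have h6 : t' - t = 0 := by
    have := congrArg (· * bB p F) h5
    simpa [mul_beta_cancel] using this
  exact ⟨sub_eq_zero.mp h4, (sub_eq_zero.mp h6).symm⟩

lemma beta_invo_comm [NeZero p] {y : FG p F} (hy : memFA p F y) :
    bB p F * invo p F y = y * bB p F := by
  refine memFA_induction (M := fun y => bB p F * invo p F y = y * bB p F) ?_ ?_ y hy
  · show bB p F * invo p F 0 = 0 * bB p F
    rw [show invo p F 0 = 0 from rfl, mul_zero, zero_mul]
  · intro g c f hg hf ih
    show bB p F * invo p F (MonoidAlgebra.single g c + f) = _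
    rw [invo_add, mul_add, add_mul, ih]
    congr 1
    obtain ⟨i, rfl⟩ := mem_Asub_iff.mp hg
    rw [invo_single, bB]
    show MonoidAlgebra.single (sr 0) 1 * MonoidAlgebra.single (r i)⁻¹ c
      = MonoidAlgebra.single (r i) c * MonoidAlgebra.single (sr 0) 1
    have hinv : (r i : Dg p)⁻¹ = r (-i) := by
      apply inv_eq_of_mul_eq_one_right
      rw [r_mul_r, add_neg_cancel, one_def]
    rw [hinv, MonoidAlgebra.single_mul_single, MonoidAlgebra.single_mul_single,
      sr_mul_r, r_mul_sr, one_mul, mul_one]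
    congr 1
    ring_nf

lemma beta_mul_memFA [NeZero p] {y : FG p F} (hy : memFA p F y) :
    bB p F * y = invo p F y * bB p F := by
  have := beta_invo_comm (memFA_invo hy)
  rwa [invo_invo] at this

lemma invo_memB [NeZero p] {z : FG p F} (hz : memB p F z) : invo p F z = z := by
  ext g
  rw [invo_apply]
  cases g with
  | r i =>
    have h1 : z.coeff (r i) = 0 := by
      by_contra h
      exact hz _ (Finsupp.mem_support_iff.mpr h) (r_mem_Asub i)
    have h2 : z.coeff ((r i : Dg p)⁻¹) = 0 := by
      by_contra h
      have := hz _ (Finsupp.mem_support_iff.mpr h)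
      exact this (inv_mem (r_mem_Asub i))
    rw [h1, h2]
  | sr j =>
    have : (sr j : Dg p)⁻¹ = sr j := inv_eq_of_mul_eq_one_right (by rw [sr_mul_sr, sub_self]; rfl)
    rw [this]

lemma twoNeZeroF (hp : p.Prime) (hodd : Odd p) [CharP F p] : (2 : F) ≠ 0 := by
  intro h
  have := (CharP.cast_eq_zero_iff F p 2).mp (by exact_mod_cast h)
  have hp2 : p = 2 := (Nat.prime_dvd_prime_iff_eq hp Nat.prime_two).mp this
  rw [hp2] at hodd
  exact (Nat.not_odd_iff_even.mpr (by decide)) hodd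

/-- Every unitary unit is either in `FA` or of the form `y·b` with `y ∈ FA`. -/
lemma unitary_decomp (hp : p.Prime) (hodd : Odd p) [CharP F p] {u : FG p F}
    (hu : IsUnitary p F u) :
    (memFA p F u ∧ u * invo p F u = 1) ∨
    (∃ y : FG p F, memFA p F y ∧ y * invo p F y = 1 ∧ u = y * bB p F) := by
  haveI : NeZero p := ⟨hp.ne_zero⟩
  set x := partA p F u with hxdef
  set z := partB p F u with hzdef
  set y := z * bB p F with hydef
  have hxA : memFA p F x := memFA_partA u
  have hzB : memB p F z := memB_partB u
  have hyA : memFA p F y := memFA_mul_beta hzB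
  have hzy : z = y * bB p F := (mul_beta_cancel z).symm
  have hu_eq : u = x + y * bB p F := by rw [← hzy, partA_add_partB]
  clear_value x z y
  have hinvu : invo p F u = invo p F x + y * bB p F := by
    rw [hu_eq, invo_add, ← hzy, invo_memB hzB, hzy]
  -- expand u * invo u
  have hxiA : memFA p F (invo p F x) := memFA_invo hxA
  have hexp : u * invo p F u
      = (x * invo p F x + y * invo p F y) + (x * y + y * x) * bB p F := by
    rw [hinvu, hu_eq]
    have e1 : (y * bB p F) * invo p F x = (y * x) * bB p F := by
      rw [mul_assoc, beta_invo_comm hxA, ← mul_assoc]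
    have e2 : (y * bB p F) * (y * bB p F) = y * invo p F y := by
      calc (y * bB p F) * (y * bB p F) = y * ((bB p F * y) * bB p F) := by
            rw [mul_assoc, mul_assoc]
      _ = y * ((invo p F y * bB p F) * bB p F) := by rw [beta_mul_memFA hyA]
      _ = y * invo p F y := by rw [mul_beta_cancel]
    have e3 : x * (y * bB p F) = (x * y) * bB p F := by rw [mul_assoc]
    rw [add_mul, mul_add, mul_add, e1, e2, e3]
    rw [add_mul]
    abel
  have hsplit := split_eq
    (memFA_add (memFA_mul hxA hxiA) (memFA_mul hyA (memFA_invo hyA)))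
    (memFA_add (memFA_mul hxA hyA) (memFA_mul hyA hxA))
    memFA_one memFA_zero
    (by rw [← hexp, hu.1, zero_mul, add_zero])
  have hA1 : x * invo p F x + y * invo p F y = 1 := hsplit.1
  have hxy0 : x * y = 0 := by
    have h2 : x * y + y * x = 0 := hsplit.2
    rw [memFA_commute hyA hxA] at h2
    have h3 : (2 : F) • (x * y) = 0 := by
      rw [two_smul]; exact h2
    rcases smul_eq_zero.mp h3 with h | h
    · exact absurd h (twoNeZeroF hp hodd)
    · exact h
  -- augmentation bookkeeping
  have haug : aug p F x * aug p F x + aug p F y * aug p F y = 1 := by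
    have := congrArg (aug p F) hA1
    rwa [aug_add, aug_mul, aug_mul, aug_invo, aug_invo, aug_one] at this
  by_cases hax : aug p F x = 0
  · -- u = y * β
    have hay : aug p F y ≠ 0 := by
      intro h
      rw [hax, h] at haug
      simp at haug
    have hx0 : x = 0 := by
      apply memFA_mul_eq_zero hp hyA hay
      rw [← memFA_commute hxA hyA, hxy0]
    have hyu : y * invo p F y = 1 := by
      rw [hx0, zero_mul, zero_add] at hA1
      exact hA1
    right
    exact ⟨y, hyA, hyu, by rw [hu_eq, hx0, zero_add]⟩
  · have hy0 : y = 0 := memFA_mul_eq_zero hp hxA hax hxy0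
    have hxu : x * invo p F x = 1 := by
      rw [hy0, zero_mul, add_zero] at hA1
      exact hA1
    left
    have hux : u = x := by rw [hu_eq, hy0, zero_mul, add_zero]
    rw [hux]
    exact ⟨hxA, hxu⟩

lemma invo_beta : invo p F (bB p F) = bB p F := by
  rw [bB, invo_single, inv_eq_of_mul_eq_one_right bb_mul_bb]

lemma one_mem_V : (1 : FG p F) ∈ VstarFA p F :=
  ⟨memFA_one, aug_one, by rw [invo_one, mul_one], by rw [invo_one, mul_one]⟩

lemma invo_mem_V {v : FG p F} (hv : v ∈ VstarFA p F) : invo p F v ∈ VstarFA p F :=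
  ⟨memFA_invo hv.1, by rw [aug_invo]; exact hv.2.1,
    by rw [IsUnitary, invo_invo]; exact ⟨hv.2.2.2, hv.2.2.1⟩⟩

lemma neg_smul_mem_V (hp : p.Prime) [CharP F p] {v : FG p F} (hmem : memFA p F v)
    (hone : v * invo p F v = 1) (haug : aug p F v = 1) : v ∈ VstarFA p F := by
  haveI : NeZero p := ⟨hp.ne_zero⟩
  refine ⟨hmem, haug, hone, ?_⟩
  rw [← memFA_commute hmem (memFA_invo hmem)]
  exact hone

/-- Normalizing a unitary FA-element by its augmentation sign. -/
lemma normalize_V (hp : p.Prime) [CharP F p] {v : FG p F} (hmem : memFA p F v)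
    (hone : v * invo p F v = 1) :
    (aug p F v = 1 ∧ v ∈ VstarFA p F) ∨ (aug p F v = -1 ∧ -v ∈ VstarFA p F) := by
  haveI : NeZero p := ⟨hp.ne_zero⟩
  have haug : aug p F v * aug p F v = 1 := by
    have := congrArg (aug p F) hone
    rwa [aug_mul, aug_invo, aug_one] at this
  rcases mul_self_eq_one_iff.mp haug with h | h
  · exact Or.inl ⟨h, neg_smul_mem_V hp hmem hone h⟩
  · refine Or.inr ⟨h, neg_smul_mem_V hp (memFA_neg hmem) ?_ ?_⟩
    · rw [invo_neg, neg_mul_neg]; exact hone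
    · rw [aug_neg, h, neg_neg]

lemma beta_unitary : IsUnitary p F (bB p F) := by
  rw [IsUnitary, invo_beta]; exact ⟨beta_sq, beta_sq⟩

lemma neg_unitary {x : FG p F} (hx : IsUnitary p F x) : IsUnitary p F (-x) := by
  rw [IsUnitary, invo_neg, neg_mul_neg, neg_mul_neg]
  exact hx

lemma one_unitary : IsUnitary p F (1 : FG p F) :=
  ⟨by rw [invo_one, mul_one], by rw [invo_one, mul_one]⟩

lemma mul_unitary {x y : FG p F} (hx : IsUnitary p F x) (hy : IsUnitary p F y) :
    IsUnitary p F (x * y) := by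
  rw [IsUnitary, invo_mul]
  constructor
  · calc x * y * (invo p F y * invo p F x)
        = x * (y * invo p F y) * invo p F x := by noncomm_ring
    _ = 1 := by rw [hy.1, mul_one, hx.1]
  · calc invo p F y * invo p F x * (x * y)
        = invo p F y * (invo p F x * x) * y := by noncomm_ring
    _ = 1 := by rw [hx.2, mul_one, hy.2]

/-- key cancellation : if `v' = v * e` with `v, v'` in `V` and `e ∈ E` then `e = 1`. -/
lemma e_eq_one (hp : p.Prime) (hodd : Odd p) [CharP F p] {v v' e : FG p F}
    (hv : v ∈ VstarFA p F) (hv' : v' ∈ VstarFA p F)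
    (he : e = 1 ∨ e = -1 ∨ e = bB p F ∨ e = -(bB p F)) (heq : v' = v * e) : e = 1 := by
  haveI : NeZero p := ⟨hp.ne_zero⟩
  rcases he with rfl | rfl | rfl | rfl
  · rfl
  · exfalso
    rw [mul_neg_one] at heq
    have := congrArg (aug p F) heq
    rw [aug_neg, hv.2.1, hv'.2.1] at this
    have h2 : (2 : F) = 0 := by linear_combination this
    exact twoNeZeroF hp hodd h2
  · exfalso
    have hB : memB p F v' := heq ▸ memB_mul_beta hv.1
    have h0 : v' = 0 := memFA_memB_eq_zero hv'.1 hB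
    have := hv'.2.1
    rw [h0] at this
    exact one_ne_zero (by rw [← this]; rfl)
  · exfalso
    rw [mul_neg] at heq
    have hB : memB p F v' := by
      rw [heq]
      intro g hg
      rw [MonoidAlgebra.coeff_neg, Finsupp.support_neg] at hg
      exact memB_mul_beta hv.1 g hg
    have h0 : v' = 0 := memFA_memB_eq_zero hv'.1 hB
    have := hv'.2.1
    rw [h0] at this
    exact one_ne_zero (by rw [← this]; rfl)

lemma exists_decomp (hp : p.Prime) (hodd : Odd p) [CharP F p] {u : FG p F}
    (hu : IsUnitary p F u) :
    ∃ v e : FG p F, v ∈ VstarFA p F ∧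
      (e = 1 ∨ e = -1 ∨ e = bB p F ∨ e = -(bB p F)) ∧ u = v * e := by
  rcases unitary_decomp hp hodd hu with ⟨humem, hone⟩ | ⟨y, hymem, hyone, hyu⟩
  · rcases normalize_V hp humem hone with ⟨_, hV⟩ | ⟨_, hV⟩
    · exact ⟨u, 1, hV, Or.inl rfl, (mul_one u).symm⟩
    · exact ⟨-u, -1, hV, Or.inr (Or.inl rfl), by rw [neg_mul_neg, mul_one]⟩
  · rcases normalize_V hp hymem hyone with ⟨_, hV⟩ | ⟨_, hV⟩
    · exact ⟨y, bB p F, hV, Or.inr (Or.inr (Or.inl rfl)), hyu⟩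
    · exact ⟨-y, -(bB p F), hV, Or.inr (Or.inr (Or.inr rfl)), by rw [neg_mul_neg, hyu]⟩

lemma conj_mem_V (hp : p.Prime) (hodd : Odd p) [CharP F p] {u v : FG p F}
    (hu : IsUnitary p F u) (hv : v ∈ VstarFA p F) :
    u * v * invo p F u ∈ VstarFA p F := by
  haveI : NeZero p := ⟨hp.ne_zero⟩
  rcases unitary_decomp hp hodd hu with ⟨humem, hone⟩ | ⟨y, hymem, hyone, hyu⟩
  · have hcomm : u * v = v * u := memFA_commute humem hv.1
    rw [hcomm, mul_assoc, hone, mul_one]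
    exact hv
  · have hinvu : invo p F u = bB p F * invo p F y := by
      rw [hyu, invo_mul, invo_beta]
    have hcalc : u * v * invo p F u = invo p F v := by
      rw [hinvu, hyu]
      calc y * bB p F * v * (bB p F * invo p F y)
          = y * (bB p F * v) * (bB p F * invo p F y) := by rw [mul_assoc y]
      _ = y * (invo p F v * bB p F) * (bB p F * invo p F y) := by
            rw [beta_mul_memFA hv.1]
      _ = y * invo p F v * (bB p F * bB p F) * invo p F y := by noncomm_ring
      _ = y * invo p F v * invo p F y := by rw [beta_sq, mul_one]
      _ = invo p F v * y * invo p F y := by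
            rw [memFA_commute hymem (memFA_invo hv.1)]
      _ = invo p F v := by rw [mul_assoc, hyone, mul_one]
    rw [hcalc]
    exact invo_mem_V hv

lemma list_sq_one {e : FG p F}
    (he : e = 1 ∨ e = -1 ∨ e = bB p F ∨ e = -(bB p F)) : e * e = 1 := by
  rcases he with rfl | rfl | rfl | rfl <;>
    simp [beta_sq, neg_mul_neg, mul_one]

lemma list_mul {e1 e2 : FG p F}
    (h1 : e1 = 1 ∨ e1 = -1 ∨ e1 = bB p F ∨ e1 = -(bB p F))
    (h2 : e2 = 1 ∨ e2 = -1 ∨ e2 = bB p F ∨ e2 = -(bB p F)) :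
    e1 * e2 = 1 ∨ e1 * e2 = -1 ∨ e1 * e2 = bB p F ∨ e1 * e2 = -(bB p F) := by
  rcases h1 with rfl | rfl | rfl | rfl <;> rcases h2 with rfl | rfl | rfl | rfl <;>
    simp [beta_sq, neg_mul, mul_neg, neg_neg, mul_one, one_mul]

/-- `𝒰_*(FD_{2p}) = V_*(FA) ⋊ (⟨b⟩ × ⟨-1⟩)` as an internal semidirect
product: `V_*(FA)` is normal in the unitary subgroup, every unitary unit is uniquely a
product of an element of `V_*(FA)` with an element of `E = ⟨b⟩ × ⟨-1⟩ = {1, -1, b, -b}`,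
and `V_*(FA) ∩ E = {1}`. -/
theorem stmt0 (p : ℕ) (hp : p.Prime) (hodd : Odd p)
    (F : Type) [Field F] [Fintype F] [CharP F p] :
    ∀ E : Set (FG p F),
      E = {1, -1, of F (Dg p) (bb p), -(of F (Dg p) (bb p))} →
      -- `E` is an elementary abelian 2-group of unitary units
      (E ⊆ unitarySet p F) ∧
      (∀ x ∈ E, ∀ y ∈ E, x * y ∈ E ∧ x * y = y * x ∧ x * x = 1) ∧
      -- `V_*(FA)` is a normal subgroup of `𝒰_*(FD_{2p})`
      (VstarFA p F ⊆ unitarySet p F) ∧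
      (∀ u ∈ unitarySet p F, ∀ v ∈ VstarFA p F, u * v * invo p F u ∈ VstarFA p F) ∧
      -- unique factorization `𝒰_*(FD_{2p}) = V_*(FA) · E`
      (∀ u ∈ unitarySet p F, ∃! w : FG p F × FG p F,
        w.1 ∈ VstarFA p F ∧ w.2 ∈ E ∧ u = w.1 * w.2) ∧
      -- trivial intersection
      VstarFA p F ∩ E = {1} := by
  haveI : NeZero p := ⟨hp.ne_zero⟩
  intro E hE
  subst hE
  have ofb : of F (Dg p) (bb p) = bB p F := rfl
  have hmemE : ∀ {x : FG p F},
      (x ∈ ({1, -1, of F (Dg p) (bb p), -(of F (Dg p) (bb p))} : Set (FG p F))) ↔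
        (x = 1 ∨ x = -1 ∨ x = bB p F ∨ x = -(bB p F)) := by
    intro x
    rw [ofb]
    simp [Set.mem_insert_iff]
  refine ⟨?_, ?_, ?_, ?_, ?_, ?_⟩
  · -- E consists of unitary units
    intro x hx
    rcases hmemE.mp hx with rfl | rfl | rfl | rfl
    · exact one_unitary
    · exact neg_unitary one_unitary
    · exact beta_unitary
    · exact neg_unitary beta_unitary
  · -- elementary abelian 2-group
    intro x hx y hy
    refine ⟨hmemE.mpr (list_mul (hmemE.mp hx) (hmemE.mp hy)), ?_, list_sq_one (hmemE.mp hx)⟩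
    rcases hmemE.mp hx with rfl | rfl | rfl | rfl <;>
      rcases hmemE.mp hy with rfl | rfl | rfl | rfl <;>
      simp [beta_sq, neg_mul, mul_neg, neg_neg, mul_one, one_mul]
  · -- V ⊆ unitary
    intro v hv
    exact hv.2.2
  · -- normality
    intro u hu v hv
    exact conj_mem_V hp hodd hu hv
  · -- unique factorization
    intro u hu
    obtain ⟨v, e, hV, hEl, heq⟩ := exists_decomp hp hodd hu
    refine ⟨(v, e), ⟨hV, hmemE.mpr hEl, heq⟩, ?_⟩
    rintro ⟨v', e'⟩ ⟨hV', hE', heq'⟩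
    have hEl' := hmemE.mp hE'
    have h : v' * e' = v * e := by rw [← heq, ← heq']
    have hee : e * e = 1 := list_sq_one hEl
    have h2 : v' * (e' * e) = v := by
      rw [← mul_assoc, h, mul_assoc, hee, mul_one]
    have hE2 : e' * e = 1 ∨ e' * e = -1 ∨ e' * e = bB p F ∨ e' * e = -(bB p F) :=
      list_mul hEl' hEl
    have he1 : e' * e = 1 := e_eq_one hp hodd hV' hV hE2 h2.symm
    have hee' : e' = e := by
      calc e' = e' * (e * e) := by rw [hee, mul_one]
      _ = (e' * e) * e := by rw [mul_assoc]
      _ = e := by rw [he1, one_mul]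
    have hvv : v' = v := by
      rw [← h2, he1, mul_one]
    rw [Prod.ext_iff]
    exact ⟨hvv, hee'⟩
  · -- trivial intersection
    ext z
    simp only [Set.mem_inter_iff, Set.mem_singleton_iff]
    constructor
    · rintro ⟨hzV, hzE⟩
      exact e_eq_one hp hodd one_mem_V hzV (hmemE.mp hzE) (one_mul z).symm
    · rintro rfl
      exact ⟨one_mem_V, Or.inl rfl⟩
end
end

section
/- Every unitary unit of FD_{2p} lying in 1 + Γ(A) belongs to V_*(FA); that is, the group of unitary units of the group 1 + Γ(A) is exactly V_*(FA), the group of unitary normalized units of the group algebra FA. -/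
noncomputable section

open MonoidAlgebra

/-! ### Auxiliary material -/

section Aux

open DihedralGroup Finsupp

/-- The rotation predicate. -/
def rot {p : ℕ} : Dg p → Prop := fun g =>
  match g with
  | DihedralGroup.r _ => True
  | DihedralGroup.sr _ => False

instance {p : ℕ} : DecidablePred (rot (p := p)) := fun g => by
  cases g with
  | r i => exact isTrue trivial
  | sr i => exact isFalse (fun h => h)

lemma rot_r {p : ℕ} (i : ZMod p) : rot (DihedralGroup.r i) := trivial

lemma not_rot_sr {p : ℕ} (i : ZMod p) : ¬ rot (DihedralGroup.sr i) := fun h => h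

lemma rot_iff {p : ℕ} {g : Dg p} : rot g ↔ ∃ i, g = DihedralGroup.r i := by
  cases g with
  | r i => exact ⟨fun _ => ⟨i, rfl⟩, fun _ => trivial⟩
  | sr i => exact ⟨fun h => absurd h (not_rot_sr i), by rintro ⟨j, h⟩; cases h⟩

lemma rot_one {p : ℕ} : rot (1 : Dg p) := trivial

lemma r_inv {p : ℕ} (i : ZMod p) : (DihedralGroup.r i)⁻¹ = DihedralGroup.r (-i) := rfl

lemma sr_inv {p : ℕ} (i : ZMod p) : (DihedralGroup.sr i)⁻¹ = DihedralGroup.sr i := rfl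

lemma rot_mul_rot {p : ℕ} {g h : Dg p} (hg : rot g) (hh : rot h) : rot (g * h) := by
  obtain ⟨i, rfl⟩ := rot_iff.mp hg
  obtain ⟨j, rfl⟩ := rot_iff.mp hh
  rw [r_mul_r]; exact rot_r _

lemma rot_mul_refl {p : ℕ} {g h : Dg p} (hg : rot g) (hh : ¬ rot h) : ¬ rot (g * h) := by
  obtain ⟨i, rfl⟩ := rot_iff.mp hg
  cases h with
  | r j => exact absurd (rot_r j) hh
  | sr j => rw [r_mul_sr]; exact not_rot_sr _

lemma refl_mul_rot {p : ℕ} {g h : Dg p} (hg : ¬ rot g) (hh : rot h) : ¬ rot (g * h) := by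
  obtain ⟨j, rfl⟩ := rot_iff.mp hh
  cases g with
  | r i => exact absurd (rot_r i) hg
  | sr i => rw [sr_mul_r]; exact not_rot_sr _

lemma refl_mul_refl {p : ℕ} {g h : Dg p} (hg : ¬ rot g) (hh : ¬ rot h) : rot (g * h) := by
  cases g with
  | r i => exact absurd (rot_r i) hg
  | sr i =>
    cases h with
    | r j => exact absurd (rot_r j) hh
    | sr j => rw [sr_mul_sr]; exact rot_r _

lemma rot_inv {p : ℕ} {g : Dg p} (hg : rot g) : rot g⁻¹ := by
  obtain ⟨i, rfl⟩ := rot_iff.mp hg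
  rw [r_inv]; exact rot_r _

variable {p : ℕ} {F : Type} [Field F]

/-- supported on rotations -/
def rotS (f : FG p F) : Prop := ∀ g ∈ f.coeff.support, rot g

/-- supported on reflections -/
def reflS (f : FG p F) : Prop := ∀ g ∈ f.coeff.support, ¬ rot g

lemma rotS_zero : rotS (0 : FG p F) := by intro g hg; simp at hg

lemma reflS_zero : reflS (0 : FG p F) := by intro g hg; simp at hg

lemma rotS_single {g : Dg p} (hg : rot g) (c : F) : rotS (MonoidAlgebra.single g c : FG p F) := by
  intro h hh
  have := Finsupp.support_single_subset hh
  rw [Finset.mem_singleton] at this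
  subst this; exact hg

lemma reflS_single {g : Dg p} (hg : ¬ rot g) (c : F) : reflS (MonoidAlgebra.single g c : FG p F) := by
  intro h hh
  have := Finsupp.support_single_subset hh
  rw [Finset.mem_singleton] at this
  subst this; exact hg

lemma rotS_one : rotS (1 : FG p F) := by
  rw [MonoidAlgebra.one_def]; exact rotS_single rot_one 1

lemma predS_add {P : Dg p → Prop} {a b : FG p F} (ha : ∀ g ∈ a.coeff.support, P g)
    (hb : ∀ g ∈ b.coeff.support, P g) : ∀ g ∈ (a + b).coeff.support, P g := by
  classical
  intro g hg
  rw [MonoidAlgebra.coeff_add] at hg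
  rcases Finset.mem_union.mp (Finsupp.support_add hg) with h | h
  · exact ha g h
  · exact hb g h

lemma rotS_add {a b : FG p F} (ha : rotS a) (hb : rotS b) : rotS (a + b) := predS_add ha hb

lemma reflS_add {a b : FG p F} (ha : reflS a) (hb : reflS b) : reflS (a + b) := predS_add ha hb

lemma rotS_neg {a : FG p F} (ha : rotS a) : rotS (-a) := by
  intro g hg; rw [MonoidAlgebra.coeff_neg, Finsupp.support_neg] at hg; exact ha g hg

lemma rotS_sub {a b : FG p F} (ha : rotS a) (hb : rotS b) : rotS (a - b) := by
  rw [sub_eq_add_neg]; exact rotS_add ha (rotS_neg hb)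

lemma reflS_neg {a : FG p F} (ha : reflS a) : reflS (-a) := by
  intro g hg; rw [MonoidAlgebra.coeff_neg, Finsupp.support_neg] at hg; exact ha g hg

lemma reflS_sub {a b : FG p F} (ha : reflS a) (hb : reflS b) : reflS (a - b) := by
  rw [sub_eq_add_neg]; exact reflS_add ha (reflS_neg hb)

lemma predS_mul {P Q R : Dg p → Prop} {a b : FG p F} (ha : ∀ g ∈ a.coeff.support, P g)
    (hb : ∀ g ∈ b.coeff.support, Q g) (hPQ : ∀ g h, P g → Q h → R (g * h)) :
    ∀ g ∈ (a * b).coeff.support, R g := by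
  classical
  intro g hg
  have := MonoidAlgebra.support_coeff_mul_subset a b hg
  rw [Finset.mem_mul] at this
  obtain ⟨x, hx, y, hy, rfl⟩ := this
  exact hPQ x y (ha x hx) (hb y hy)

lemma rotS_mul {a b : FG p F} (ha : rotS a) (hb : rotS b) : rotS (a * b) :=
  predS_mul ha hb fun _ _ => rot_mul_rot

lemma reflS_mul_rot {a b : FG p F} (ha : reflS a) (hb : rotS b) : reflS (a * b) :=
  predS_mul ha hb fun _ _ => refl_mul_rot

lemma rotS_mul_refl {a b : FG p F} (ha : rotS a) (hb : reflS b) : reflS (a * b) :=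
  predS_mul ha hb fun _ _ => rot_mul_refl

lemma reflS_mul_refl {a b : FG p F} (ha : reflS a) (hb : reflS b) : rotS (a * b) :=
  predS_mul ha hb fun _ _ => refl_mul_refl

lemma eq_zero_of_rotS_reflS {d : FG p F} (h1 : rotS d) (h2 : reflS d) : d = 0 :=
  MonoidAlgebra.coeff_injective <| Finsupp.support_eq_empty.mp
    (Finset.eq_empty_iff_forall_notMem.mpr fun g hg => h2 g hg (h1 g hg))

lemma split_unique {a b a' b' : FG p F} (ha : rotS a) (hb : reflS b) (ha' : rotS a')
    (hb' : reflS b') (h : a + b = a' + b') : a = a' ∧ b = b' := by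
  have hd : a - a' = b' - b := by
    rw [sub_eq_sub_iff_add_eq_add, h, add_comm]
  have hz : a - a' = 0 :=
    eq_zero_of_rotS_reflS (rotS_sub ha ha') (hd ▸ reflS_sub hb' hb)
  constructor
  · exact sub_eq_zero.mp hz
  · have : b' - b = 0 := by rw [← hd, hz]
    exact (sub_eq_zero.mp this).symm

lemma invo_zero : invo p F 0 = 0 := by
  ext g; rw [invo_apply]; rfl

lemma reflS_invo_eq {w : FG p F} (hw : reflS w) : invo p F w = w := by
  have h1 : ∀ j : ZMod p, w.coeff (DihedralGroup.r j) = 0 := fun j => by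
    by_contra hne
    exact hw _ (Finsupp.mem_support_iff.mpr hne) (rot_r j)
  ext g
  rw [invo_apply]
  cases g with
  | r i => rw [r_inv, h1, h1]
  | sr i => rw [sr_inv]

lemma rotS_invo {u : FG p F} (hu : rotS u) : rotS (invo p F u) := by
  intro g hg
  rw [Finsupp.mem_support_iff, invo_apply] at hg
  have : rot g⁻¹ := hu _ (Finsupp.mem_support_iff.mpr hg)
  have := rot_inv this
  rwa [inv_inv] at this

/-! commutation lemmas -/

lemma support_piece {g : Dg p} {c : F} {f : FG p F} {P : Dg p → Prop} (hgf : g ∉ f.coeff.support)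
    (hc : c ≠ 0) (hP : ∀ h ∈ (MonoidAlgebra.single g c + f : FG p F).coeff.support, P h) :
    P g ∧ ∀ h ∈ f.coeff.support, P h := by
  classical
  have hdisj : Disjoint (MonoidAlgebra.single g c : FG p F).coeff.support f.coeff.support := by
    rw [MonoidAlgebra.coeff_single, Finsupp.support_single_ne_zero _ hc]
    simpa using hgf
  have hsupp : (MonoidAlgebra.single g c + f : FG p F).coeff.support = (MonoidAlgebra.single g c : FG p F).coeff.support ∪ f.coeff.support := by
    rw [MonoidAlgebra.coeff_add]; exact Finsupp.support_add_eq hdisj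
  constructor
  · apply hP
    rw [hsupp, Finset.mem_union, MonoidAlgebra.coeff_single, Finsupp.support_single_ne_zero _ hc]
    exact Or.inl (Finset.mem_singleton_self g)
  · intro h hh
    apply hP
    rw [hsupp, Finset.mem_union]
    exact Or.inr hh

lemma single_comm_rot {g h : Dg p} (hg : rot g) (hh : rot h) (a b : F) :
    (MonoidAlgebra.single g a : FG p F) * MonoidAlgebra.single h b = MonoidAlgebra.single h b * MonoidAlgebra.single g a := by
  rw [MonoidAlgebra.single_mul_single, MonoidAlgebra.single_mul_single]
  obtain ⟨i, rfl⟩ := rot_iff.mp hg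
  obtain ⟨j, rfl⟩ := rot_iff.mp hh
  rw [r_mul_r, r_mul_r, add_comm, mul_comm]

lemma single_comm_rotS {g : Dg p} (hg : rot g) (a : F) (c : FG p F) (hc : rotS c) :
    (MonoidAlgebra.single g a : FG p F) * c = c * MonoidAlgebra.single g a := by
  induction c using MonoidAlgebra.induction with
  | zero => simp
  | single_add h b f hhf hb ih =>
    obtain ⟨hh, hf⟩ := support_piece hhf hb hc
    rw [mul_add, add_mul, single_comm_rot hg hh, ih hf]

lemma rot_comm {a c : FG p F} (ha : rotS a) (hc : rotS c) : a * c = c * a := by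
  induction a using MonoidAlgebra.induction with
  | zero => simp
  | single_add g b f hgf hb ih =>
    obtain ⟨hg, hf⟩ := support_piece hgf hb ha
    rw [add_mul, mul_add, single_comm_rotS hg b c hc, ih hf]

lemma single_refl_mul_rotS {g : Dg p} (hg : ¬ rot g) (a : F) (c : FG p F) (hc : rotS c) :
    (MonoidAlgebra.single g a : FG p F) * c = invo p F c * MonoidAlgebra.single g a := by
  induction c using MonoidAlgebra.induction with
  | zero => rw [mul_zero, invo_zero, zero_mul]
  | single_add h b f hhf hb ih =>
    obtain ⟨hh, hf⟩ := support_piece hhf hb hc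
    rw [mul_add, invo_add, add_mul, ih hf]
    congr 1
    rw [invo_single, MonoidAlgebra.single_mul_single, MonoidAlgebra.single_mul_single]
    obtain ⟨j, rfl⟩ := rot_iff.mp hh
    cases g with
    | r i => exact absurd (rot_r i) hg
    | sr i =>
      rw [sr_mul_r, r_inv, r_mul_sr, sub_neg_eq_add, mul_comm]

lemma reflS_mul_rotS_comm {w c : FG p F} (hw : reflS w) (hc : rotS c) :
    w * c = invo p F c * w := by
  induction w using MonoidAlgebra.induction with
  | zero => rw [zero_mul, mul_zero]
  | single_add g b f hgf hb ih =>
    obtain ⟨hg, hf⟩ := support_piece hgf hb hw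
    rw [add_mul, mul_add, single_refl_mul_rotS hg b c hc, ih hf]

/-! augmentation as ring homs -/

/-- The sign character. -/
def sgn (p : ℕ) (F : Type) [Field F] : Dg p →* F where
  toFun g := match g with
    | DihedralGroup.r _ => 1
    | DihedralGroup.sr _ => (-1 : F)
  map_one' := rfl
  map_mul' := by
    rintro (i | i) (j | j) <;> norm_num

lemma sgn_rot {g : Dg p} (hg : rot g) : sgn p F g = 1 := by
  obtain ⟨i, rfl⟩ := rot_iff.mp hg; rfl

lemma sgn_refl {g : Dg p} (hg : ¬ rot g) : sgn p F g = -1 := by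
  cases g with
  | r i => exact absurd (rot_r i) hg
  | sr i => rfl

/-- augmentation as an algebra hom -/
def augH (p : ℕ) (F : Type) [Field F] : FG p F →ₐ[F] F :=
  MonoidAlgebra.lift F F (Dg p) 1

/-- sign character as an algebra hom -/
def chiH (p : ℕ) (F : Type) [Field F] : FG p F →ₐ[F] F :=
  MonoidAlgebra.lift F F (Dg p) (sgn p F)

lemma augH_eq (x : FG p F) : augH p F x = aug p F x := by
  rw [augH, MonoidAlgebra.lift_apply]
  simp only [MonoidHom.one_apply, smul_eq_mul, mul_one]
  rfl

lemma chiH_rotS {c : FG p F} (hc : rotS c) : chiH p F c = aug p F c := by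
  rw [chiH, MonoidAlgebra.lift_apply, aug]
  apply Finsupp.sum_congr
  intro g hg
  rw [sgn_rot (hc g hg), smul_eq_mul, mul_one]

lemma chiH_reflS {w : FG p F} (hw : reflS w) : chiH p F w = - aug p F w := by
  rw [chiH, MonoidAlgebra.lift_apply, aug]
  have h1 : (Finsupp.sum w.coeff fun a b => b • sgn p F a) = Finsupp.sum w.coeff fun _ b => -b :=
    Finsupp.sum_congr (fun g hg => by rw [sgn_refl (hw g hg), smul_eq_mul]; ring)
  rw [h1, Finsupp.sum, Finsupp.sum, Finset.sum_neg_distrib]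

/-! membership in `Asub` -/

/-- The subgroup of rotations. -/
def Rsub (q : ℕ) : Subgroup (Dg q) where
  carrier := {g : Dg q | rot g}
  one_mem' := rot_one (p := q)
  mul_mem' := by intro a b ha hb; exact rot_mul_rot ha hb
  inv_mem' := by intro a ha; exact rot_inv ha

lemma mem_Rsub {q : ℕ} {g : Dg q} : g ∈ Rsub q ↔ rot g := ⟨fun h => h, fun h => h⟩

lemma asub_iff_rot (hp : 0 < p) {g : Dg p} : g ∈ Asub p ↔ rot g := by
  haveI : NeZero p := ⟨hp.ne'⟩
  constructor
  · intro hg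
    exact mem_Rsub.mp (Subgroup.zpowers_le.mpr (mem_Rsub.mpr (rot_r 1)) hg)
  · intro hg
    obtain ⟨i, rfl⟩ := rot_iff.mp hg
    have key : (aa p) ^ (i.val) = DihedralGroup.r i := by
      rw [show aa p = DihedralGroup.r 1 from rfl, DihedralGroup.r_one_pow]
      congr 1
      rw [ZMod.natCast_val, ZMod.cast_id]
    rw [← key]
    exact Subgroup.npow_mem_zpowers _ _

/-! generators of `Γ(A)` die under characters fixing `A` -/

lemma char_of_oneGamma (φ : FG p F →ₐ[F] F)
    (hφ : ∀ i : ZMod p, φ (MonoidAlgebra.single (DihedralGroup.r i) 1) = 1) {x : FG p F}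
    (hx : x ∈ oneGamma p F) (hp : 0 < p) : φ x = 1 := by
  have hker : gammaA p F ≤ RingHom.ker (φ.toRingHom) := by
    rw [gammaA, Ideal.span_le]
    rintro y ⟨h, hh, rfl⟩
    obtain ⟨i, rfl⟩ := rot_iff.mp ((asub_iff_rot hp).mp hh)
    rw [SetLike.mem_coe, RingHom.mem_ker, AlgHom.toRingHom_eq_coe, RingHom.coe_coe]
    rw [map_sub, map_one, show (MonoidAlgebra.of F (Dg p) (DihedralGroup.r i) : FG p F)
        = MonoidAlgebra.single (DihedralGroup.r i) 1 from rfl, hφ i, sub_self]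
  have hx0 := RingHom.mem_ker.mp (hker hx)
  simp only [AlgHom.toRingHom_eq_coe, RingHom.coe_coe] at hx0
  rw [map_sub, map_one, sub_eq_zero] at hx0
  exact hx0

/-! Frobenius lemma -/

lemma r_pow (i : ZMod p) (n : ℕ) :
    (DihedralGroup.r i : Dg p) ^ n = DihedralGroup.r ((n : ZMod p) * i) := by
  induction n with
  | zero => rw [pow_zero, Nat.cast_zero, zero_mul]; rfl
  | succ n ih =>
    rw [pow_succ, ih, r_mul_r]
    congr 1
    push_cast
    ring

lemma rot_pow_p (hp : p.Prime) [CharP F p] {c : FG p F} (hc : rotS c) :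
    c ^ p = (aug p F c) ^ p • (1 : FG p F) := by
  haveI : Fact p.Prime := ⟨hp⟩
  haveI : CharP (FG p F) p :=
    charP_of_injective_algebraMap (algebraMap F (FG p F)).injective p
  induction c using MonoidAlgebra.induction with
  | zero =>
    rw [zero_pow hp.ne_zero]
    rw [show aug p F 0 = 0 from rfl, zero_pow hp.ne_zero, zero_smul]
  | single_add g b f hgf hb ih =>
    obtain ⟨hg, hf⟩ := support_piece hgf hb hc
    have hcomm : Commute (MonoidAlgebra.single g b : FG p F) f :=
      rot_comm (rotS_single hg b) hf
    rw [add_pow_char_of_commute _ hcomm, MonoidAlgebra.single_pow, ih hf]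
    obtain ⟨i, rfl⟩ := rot_iff.mp hg
    rw [_root_.r_pow, ZMod.natCast_self, zero_mul]
    rw [aug_add, aug_single, add_pow_char]
    rw [show (DihedralGroup.r (0 : ZMod p)) = (1 : Dg p) from rfl]
    rw [MonoidAlgebra.one_def, MonoidAlgebra.smul_single, MonoidAlgebra.smul_single, smul_eq_mul, smul_eq_mul,
      mul_one, mul_one, ← MonoidAlgebra.single_add]

lemma odd_pow_eq {R : Type} [Monoid R] (w : R) (h3 : w * w * w = w) :
    ∀ k : ℕ, w ^ (2 * k + 1) = w
  | 0 => by rw [mul_zero, zero_add, pow_one]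
  | k + 1 => by
    rw [show 2 * (k + 1) + 1 = (2 * k + 1) + 2 by ring, pow_add, odd_pow_eq w h3 k,
      pow_two, ← mul_assoc, h3]

lemma half_cancel {M : Type} [AddCommGroup M] [Module F M] (h2 : (2 : F) ≠ 0) {z : M}
    (hz : z + z = 0) : z = 0 := by
  have h : (2 : F) • z = 0 := by
    rw [show (2 : F) = 1 + 1 by norm_num, add_smul, one_smul]; exact hz
  have := congrArg (fun t => (2 : F)⁻¹ • t) h
  simpa [smul_smul, inv_mul_cancel₀ h2] using this

end Aux

/-- The unitary units of the group `1 + Γ(A)` are exactly `V_*(FA)`. -/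
theorem stmt1 (p : ℕ) (hp : p.Prime) (hodd : Odd p)
    (F : Type) [Field F] [Fintype F] [CharP F p] :
    {x : FG p F | x ∈ oneGamma p F ∧ IsUnitary p F x} = VstarFA p F := by
  classical
  haveI : Fact p.Prime := ⟨hp⟩
  have hppos : 0 < p := hp.pos
  have h2 : (2 : F) ≠ 0 := by
    intro h
    have := (CharP.cast_eq_zero_iff F p 2).mp (by exact_mod_cast h)
    have hp2 : p = 2 := (Nat.prime_dvd_prime_iff_eq hp Nat.prime_two).mp this
    rw [hp2] at hodd
    exact (Nat.not_odd_iff_even.mpr (by norm_num)) hodd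
  ext x
  simp only [Set.mem_setOf_eq, VstarFA]
  constructor
  · rintro ⟨hγ, hunit⟩
    -- decomposition x = u + w
    set u : FG p F := MonoidAlgebra.ofCoeff (Finsupp.filter rot x.coeff) with hu_def
    set w : FG p F := MonoidAlgebra.ofCoeff (Finsupp.filter (fun g => ¬ rot g) x.coeff) with hw_def
    have huw : u + w = x := congrArg MonoidAlgebra.ofCoeff (Finsupp.filter_pos_add_filter_neg x.coeff rot)
    have hu : rotS u := by
      intro g hg
      rw [Finsupp.mem_support_iff, hu_def, MonoidAlgebra.coeff_ofCoeff, Finsupp.filter_apply] at hg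
      by_contra hr
      rw [if_neg hr] at hg
      exact hg rfl
    have hw : reflS w := by
      intro g hg
      rw [Finsupp.mem_support_iff, hw_def, MonoidAlgebra.coeff_ofCoeff, Finsupp.filter_apply] at hg
      intro hr
      rw [if_neg (fun hn => hn hr)] at hg
      exact hg rfl
    -- character values
    have hauga : augH p F x = 1 := by
      apply char_of_oneGamma _ _ hγ hppos
      intro i
      rw [augH, show (MonoidAlgebra.single (DihedralGroup.r i) (1:F) : FG p F)
        = MonoidAlgebra.of F (Dg p) (DihedralGroup.r i) from rfl, MonoidAlgebra.lift_of]
      rfl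
    have hchia : chiH p F x = 1 := by
      apply char_of_oneGamma _ _ hγ hppos
      intro i
      rw [chiH, show (MonoidAlgebra.single (DihedralGroup.r i) (1:F) : FG p F)
        = MonoidAlgebra.of F (Dg p) (DihedralGroup.r i) from rfl, MonoidAlgebra.lift_of]
      exact sgn_rot (rot_r i)
    have haugx : aug p F x = 1 := by rw [← augH_eq]; exact hauga
    -- aug w = 0
    have hsum1 : aug p F u + aug p F w = 1 := by
      rw [← augH_eq, ← augH_eq, ← map_add, huw]; exact hauga
    have hsum2 : aug p F u - aug p F w = 1 := by
      have : chiH p F u + chiH p F w = 1 := by rw [← map_add, huw]; exact hchia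
      rw [chiH_rotS hu, chiH_reflS hw] at this
      rw [sub_eq_add_neg]
      exact this
    have haugw : aug p F w = 0 := by
      have h2b : aug p F w + aug p F w = 0 := by linear_combination hsum1 - hsum2
      exact half_cancel h2 h2b
    -- invo decomposition
    set u' : FG p F := invo p F u with hu'_def
    have hu' : rotS u' := rotS_invo hu
    have hinvx : invo p F x = u' + w := by
      rw [← huw, invo_add, reflS_invo_eq hw]
    have hwu' : w * u' = u * w := by
      rw [reflS_mul_rotS_comm hw hu', hu'_def, invo_invo]
    have hwu : w * u = u' * w := by
      rw [reflS_mul_rotS_comm hw hu]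
    -- unitary equations
    have heq1 := hunit.1
    have heq2 := hunit.2
    rw [hinvx, ← huw] at heq1 heq2
    have hexp1 : (u * u' + w * w) + (u * w + u * w) = 1 + 0 := by
      rw [add_zero, ← heq1]
      rw [add_mul, mul_add, mul_add, hwu']
      abel
    have hexp2 : (u' * u + w * w) + (u' * w + u' * w) = 1 + 0 := by
      rw [add_zero, ← heq2]
      rw [add_mul, mul_add, mul_add, hwu]
      abel
    obtain ⟨hA1, hB1⟩ := split_unique
      (rotS_add (rotS_mul hu hu') (reflS_mul_refl hw hw))
      (reflS_add (rotS_mul_refl hu hw) (rotS_mul_refl hu hw))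
      rotS_one reflS_zero hexp1
    obtain ⟨hA2, hB2⟩ := split_unique
      (rotS_add (rotS_mul hu' hu) (reflS_mul_refl hw hw))
      (reflS_add (rotS_mul_refl hu' hw) (rotS_mul_refl hu' hw))
      rotS_one reflS_zero hexp2
    have huw0 : u * w = 0 := half_cancel h2 hB1
    have hu'w0 : u' * w = 0 := half_cancel h2 hB2
    -- w^3 = w
    have hw3 : w * w * w = w := by
      have := congrArg (fun t => w * t) hA2
      simp only [mul_add, mul_one] at this
      rw [← mul_assoc, hwu', huw0, zero_mul, zero_add, ← mul_assoc] at this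
      exact this
    -- (w*w)^p = 0
    have hww : (w * w) ^ p = 0 := by
      have h := rot_pow_p hp (reflS_mul_refl hw hw)
      have haug2 : aug p F (w * w) = 0 := by
        have : augH p F (w * w) = augH p F w * augH p F w := map_mul _ _ _
        simp only [augH_eq] at this
        rw [haugw, mul_zero] at this
        exact this
      rw [haug2, zero_pow hp.ne_zero, zero_smul] at h
      exact h
    -- w = 0
    have hwzero : w = 0 := by
      have h1 : w ^ (2 * p + 1) = w := odd_pow_eq w hw3 p
      have h2' : w ^ (2 * p + 1) = (w * w) ^ p * w := by
        rw [pow_succ, pow_mul, pow_two]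
      rw [h2', hww, zero_mul] at h1
      exact h1.symm
    have hxu : x = u := by rw [← huw, hwzero, add_zero]
    refine ⟨?_, haugx, hunit⟩
    intro g hg
    rw [asub_iff_rot hppos]
    rw [hxu] at hg
    exact hu g hg
  · rintro ⟨hmem, haug1, hunit⟩
    refine ⟨?_, hunit⟩
    rw [oneGamma, Set.mem_setOf_eq]
    have key : x - 1 = ∑ g ∈ x.coeff.support, x.coeff g • ((MonoidAlgebra.of F (Dg p) g : FG p F) - 1) := by
      have h1 : ∑ g ∈ x.coeff.support, x.coeff g • ((MonoidAlgebra.of F (Dg p) g : FG p F) - 1)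
          = (∑ g ∈ x.coeff.support, x.coeff g • (MonoidAlgebra.of F (Dg p) g : FG p F))
            - (∑ g ∈ x.coeff.support, x.coeff g) • (1 : FG p F) := by
        rw [Finset.sum_smul, ← Finset.sum_sub_distrib]
        apply Finset.sum_congr rfl
        intros; rw [smul_sub]
      have h2 : ∑ g ∈ x.coeff.support, x.coeff g • (MonoidAlgebra.of F (Dg p) g : FG p F) = x := by
        conv_rhs => rw [← MonoidAlgebra.sum_coeff_single x]
        rw [Finsupp.sum]
        apply Finset.sum_congr rfl
        intro g _
        rw [show (MonoidAlgebra.of F (Dg p) g : FG p F) = MonoidAlgebra.single g 1 from rfl,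
          MonoidAlgebra.smul_single, smul_eq_mul, mul_one]
      have h3 : (∑ g ∈ x.coeff.support, x.coeff g) = aug p F x := rfl
      rw [h1, h2, h3, haug1, one_smul]
    rw [key]
    apply Ideal.sum_mem
    intro g hg
    have hgen : (MonoidAlgebra.of F (Dg p) g : FG p F) - 1 ∈ gammaA p F :=
      Ideal.subset_span ⟨g, hmem g hg, rfl⟩
    have : x.coeff g • ((MonoidAlgebra.of F (Dg p) g : FG p F) - 1)
        = (x.coeff g • (1 : FG p F)) * ((MonoidAlgebra.of F (Dg p) g : FG p F) - 1) := by
      rw [smul_mul_assoc, one_mul]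
    rw [this]
    exact Ideal.mul_mem_left _ _ hgen
end
end

section
/- For all 1 ≤ i, j ≤ l one has ω_i ω_j = 0 and ω_i' ω_j' = 0, and moreover ω_i ω_i' = 2(a^{2i} + a^{−2i} − 2)(1 − b) and ω_i' ω_i = 2(a^{2i} + a^{−2i} − 2)(1 + b) in FD_{2p}. -/
noncomputable section

open MonoidAlgebra

/-- `ω_i = (a^i - a^{-i})(1 + b)`. -/
def ww (p : ℕ) (F : Type) [Field F] (i : ℕ) : FG p F :=
  ((of F (Dg p) ((aa p) ^ i) : FG p F) - of F (Dg p) ((aa p) ^ i)⁻¹) *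
    (1 + of F (Dg p) (bb p))

/-- `ω_i' = (a^i - a^{-i})(1 - b)`. -/
def ww' (p : ℕ) (F : Type) [Field F] (i : ℕ) : FG p F :=
  ((of F (Dg p) ((aa p) ^ i) : FG p F) - of F (Dg p) ((aa p) ^ i)⁻¹) *
    (1 - of F (Dg p) (bb p))

section helpers
variable {R : Type*} [Ring R]

lemma hsub (B : R) (hB : B * B = 1) : (1 - B) * (1 + B) = 0 := by
  have h : (1 - B) * (1 + B) = 1 - B * B := by noncomm_ring
  rw [h, hB, sub_self]

lemma hadd (B : R) (hB : B * B = 1) : (1 + B) * (1 - B) = 0 := by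
  have h : (1 + B) * (1 - B) = 1 - B * B := by noncomm_ring
  rw [h, hB, sub_self]

lemma swap1 (X B : R) (hX : B * X = -(X * B)) : (1 + B) * X = X * (1 - B) := by
  rw [add_mul, one_mul, hX, mul_sub, mul_one, sub_eq_add_neg]

lemma swap2 (X B : R) (hX : B * X = -(X * B)) : (1 - B) * X = X * (1 + B) := by
  rw [sub_mul, one_mul, hX, mul_add, mul_one, sub_neg_eq_add]

lemma key1 (X X' B : R) (hB : B * B = 1) (hX' : B * X' = -(X' * B)) :
    (X * (1 + B)) * (X' * (1 + B)) = 0 := by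
  calc (X * (1 + B)) * (X' * (1 + B)) = X * (((1 + B) * X') * (1 + B)) := by noncomm_ring
    _ = X * ((X' * (1 - B)) * (1 + B)) := by rw [swap1 X' B hX']
    _ = X * (X' * ((1 - B) * (1 + B))) := by noncomm_ring
    _ = 0 := by rw [hsub B hB, mul_zero, mul_zero]

lemma key2 (X X' B : R) (hB : B * B = 1) (hX' : B * X' = -(X' * B)) :
    (X * (1 - B)) * (X' * (1 - B)) = 0 := by
  calc (X * (1 - B)) * (X' * (1 - B)) = X * (((1 - B) * X') * (1 - B)) := by noncomm_ring
    _ = X * ((X' * (1 + B)) * (1 - B)) := by rw [swap2 X' B hX']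
    _ = X * (X' * ((1 + B) * (1 - B))) := by noncomm_ring
    _ = 0 := by rw [hadd B hB, mul_zero, mul_zero]

lemma key3 (X B : R) (hB : B * B = 1) (hX : B * X = -(X * B)) :
    (X * (1 + B)) * (X * (1 - B)) = (X * X) * (2 * (1 - B)) := by
  calc (X * (1 + B)) * (X * (1 - B)) = X * (((1 + B) * X) * (1 - B)) := by noncomm_ring
    _ = X * ((X * (1 - B)) * (1 - B)) := by rw [swap1 X B hX]
    _ = X * (X * ((1 - B) * (1 - B))) := by noncomm_ring
    _ = (X * X) * (2 * (1 - B)) := by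
        have h : (1 - B) * (1 - B) = 1 - 2 * B + B * B := by noncomm_ring
        rw [h, hB]; noncomm_ring

lemma key4 (X B : R) (hB : B * B = 1) (hX : B * X = -(X * B)) :
    (X * (1 - B)) * (X * (1 + B)) = (X * X) * (2 * (1 + B)) := by
  calc (X * (1 - B)) * (X * (1 + B)) = X * (((1 - B) * X) * (1 + B)) := by noncomm_ring
    _ = X * ((X * (1 + B)) * (1 + B)) := by rw [swap2 X B hX]
    _ = X * (X * ((1 + B) * (1 + B))) := by noncomm_ring
    _ = (X * X) * (2 * (1 + B)) := by
        have h : (1 + B) * (1 + B) = 1 + 2 * B + B * B := by noncomm_ring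
        rw [h, hB]; noncomm_ring

end helpers

section mainproof
variable (p : ℕ) (F : Type) [Field F]

lemma bb_mul_pow (n : ℕ) : bb p * (aa p ^ n) = (aa p ^ n)⁻¹ * bb p := by
  have hinv : (DihedralGroup.r (n : ZMod p))⁻¹ = DihedralGroup.r (-(n : ZMod p)) := rfl
  simp [aa, bb, DihedralGroup.r_one_pow, hinv, DihedralGroup.sr_mul_r,
    DihedralGroup.r_mul_sr]

lemma bb_mul_pow_inv (n : ℕ) : bb p * (aa p ^ n)⁻¹ = (aa p ^ n) * bb p := by
  have hinv : (DihedralGroup.r (n : ZMod p))⁻¹ = DihedralGroup.r (-(n : ZMod p)) := rfl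
  simp [aa, bb, DihedralGroup.r_one_pow, hinv, DihedralGroup.sr_mul_r,
    DihedralGroup.r_mul_sr]

lemma bb_sq : bb p * bb p = 1 := by
  simp [bb, DihedralGroup.sr_mul_sr]

lemma B_sq : (of F (Dg p) (bb p) : FG p F) * of F (Dg p) (bb p) = 1 := by
  rw [← map_mul, bb_sq, map_one]

lemma B_anticomm (n : ℕ) :
    (of F (Dg p) (bb p) : FG p F) *
      ((of F (Dg p) ((aa p) ^ n) : FG p F) - of F (Dg p) ((aa p) ^ n)⁻¹) =
    -(((of F (Dg p) ((aa p) ^ n) : FG p F) - of F (Dg p) ((aa p) ^ n)⁻¹) *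
      of F (Dg p) (bb p)) := by
  rw [mul_sub, sub_mul, ← map_mul, ← map_mul, ← map_mul, ← map_mul,
    bb_mul_pow, bb_mul_pow_inv, neg_sub]

lemma X_sq (n : ℕ) :
    ((of F (Dg p) ((aa p) ^ n) : FG p F) - of F (Dg p) ((aa p) ^ n)⁻¹) *
      ((of F (Dg p) ((aa p) ^ n) : FG p F) - of F (Dg p) ((aa p) ^ n)⁻¹) =
    (of F (Dg p) ((aa p) ^ (2 * n)) : FG p F) + of F (Dg p) ((aa p) ^ (2 * n))⁻¹ - 2 := by
  set u : FG p F := of F (Dg p) ((aa p) ^ n)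
  set v : FG p F := of F (Dg p) ((aa p) ^ n)⁻¹
  have huv : u * v = 1 := by rw [← map_mul, mul_inv_cancel, map_one]
  have hvu : v * u = 1 := by rw [← map_mul, inv_mul_cancel, map_one]
  have huu : u * u = of F (Dg p) ((aa p) ^ (2 * n)) := by
    rw [← map_mul, ← pow_add, two_mul]
  have hvv : v * v = of F (Dg p) ((aa p) ^ (2 * n))⁻¹ := by
    rw [← map_mul, ← mul_inv_rev, ← pow_add, two_mul]
  have hexp : (u - v) * (u - v) = u * u + v * v - (u * v + v * u) := by noncomm_ring
  rw [hexp, huv, hvu, huu, hvv, one_add_one_eq_two]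

end mainproof

/-- For `1 ≤ i, j ≤ l`: `ω_iω_j = 0`, `ω_i'ω_j' = 0`,
`ω_iω_i' = 2(a^{2i} + a^{-2i} - 2)(1 - b)` and `ω_i'ω_i = 2(a^{2i} + a^{-2i} - 2)(1 + b)`. -/
theorem stmt6 (p : ℕ) (hp : p.Prime) (hodd : Odd p)
    (F : Type) [Field F] [Fintype F] [CharP F p] :
    ∀ l : ℕ, l = (p - 1) / 2 →
    ∀ i j : ℕ, 1 ≤ i → i ≤ l → 1 ≤ j → j ≤ l →
      ww p F i * ww p F j = 0 ∧
      ww' p F i * ww' p F j = 0 ∧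
      ww p F i * ww' p F i =
        2 * ((of F (Dg p) ((aa p) ^ (2 * i)) : FG p F)
              + of F (Dg p) ((aa p) ^ (2 * i))⁻¹ - 2) * (1 - of F (Dg p) (bb p)) ∧
      ww' p F i * ww p F i =
        2 * ((of F (Dg p) ((aa p) ^ (2 * i)) : FG p F)
              + of F (Dg p) ((aa p) ^ (2 * i))⁻¹ - 2) * (1 + of F (Dg p) (bb p)) := by
  intro l hl i j hi hil hj hjl
  have hB := B_sq p F
  refine ⟨?_, ?_, ?_, ?_⟩
  · exact key1 _ _ _ hB (B_anticomm p F j)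
  · exact key2 _ _ _ hB (B_anticomm p F j)
  · rw [ww, ww', key3 _ _ hB (B_anticomm p F i), X_sq]
    noncomm_ring
  · rw [ww', ww, key4 _ _ hB (B_anticomm p F i), X_sq]
    noncomm_ring
end
end

section
/- The center of the group 1 + Γ(A) equals the intersection of the center of the algebra FD_{2p} with 1 + Γ(A): Z(1 + Γ(A)) = Z(FD_{2p}) ∩ (1 + Γ(A)). -/
noncomputable section

open MonoidAlgebra

/-- The center of the group `1 + Γ(A)`. -/
def Zcen (p : ℕ) (F : Type) [Field F] : Set (FG p F) :=
  {x | x ∈ oneGamma p F ∧ ∀ y ∈ oneGamma p F, x * y = y * x}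

/-- `Â = 1 + a + a² + ⋯ + a^{p-1}`. -/
def Ahat (p : ℕ) (F : Type) [Field F] : FG p F :=
  ∑ j ∈ Finset.range p, of F (Dg p) ((aa p) ^ j)


open DihedralGroup in
private lemma dih_inv_r {n : ℕ} (i : ZMod n) : (r i)⁻¹ = r (-i) := rfl
open DihedralGroup in
private lemma dih_inv_sr {n : ℕ} (i : ZMod n) : (sr i)⁻¹ = sr i := rfl

private lemma eq_of_step {p : ℕ} [NeZero p] {F : Type} (f : ZMod p → F)
    (h : ∀ i, f (i + 1) = f i) (i : ZMod p) : f i = f 0 := by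
  obtain ⟨n, rfl⟩ := ZMod.natCast_zmod_surjective i
  induction n with
  | zero => norm_num
  | succ n ih => push_cast; rw [h, ih]

/-- `Z(1 + Γ(A)) = Z(FD_{2p}) ∩ (1 + Γ(A))`. -/
theorem stmt8 (p : ℕ) (hp : p.Prime) (hodd : Odd p)
    (F : Type) [Field F] [Fintype F] [CharP F p] :
    Zcen p F = {x : FG p F | (∀ y : FG p F, x * y = y * x) ∧ x ∈ oneGamma p F} := by
  haveI : NeZero p := ⟨hp.pos.ne'⟩
  haveI : Fact p.Prime := ⟨hp⟩
  ext x
  simp only [Zcen, Set.mem_setOf_eq]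
  constructor
  · rintro ⟨hx1, hx2⟩
    refine ⟨?_, hx1⟩
    -- x commutes with every element of Γ(A)
    have hcomm : ∀ γ ∈ gammaA p F, x * γ = γ * x := by
      intro γ hγ
      have h1 : (1 : FG p F) + γ ∈ oneGamma p F := by
        simpa [oneGamma] using hγ
      have h := hx2 _ h1
      rw [mul_add, add_mul, mul_one, one_mul] at h
      exact add_left_cancel h
    set A1 : FG p F := of F (Dg p) (aa p) with hA1
    set B : FG p F := of F (Dg p) (bb p) with hB
    have hmemA : A1 - 1 ∈ gammaA p F :=
      Ideal.subset_span ⟨aa p, Subgroup.mem_zpowers _, rfl⟩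
    have h1 : x * A1 = A1 * x := by
      have := hcomm _ hmemA
      rw [mul_sub, sub_mul, mul_one, one_mul] at this
      exact sub_left_inj.mp this
    have h2 : x * (B * (A1 - 1)) = (B * (A1 - 1)) * x :=
      hcomm _ (Ideal.mul_mem_left _ _ hmemA)
    set c : FG p F := x * B - B * x with hcdef
    have h1' : x * (A1 - 1) = (A1 - 1) * x := by
      rw [mul_sub, sub_mul, mul_one, one_mul, h1]
    have hc0 : c * (A1 - 1) = 0 := by
      have key : x * B * (A1 - 1) = B * x * (A1 - 1) := by
        calc x * B * (A1 - 1) = x * (B * (A1 - 1)) := by rw [mul_assoc]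
          _ = (B * (A1 - 1)) * x := h2
          _ = B * ((A1 - 1) * x) := by rw [mul_assoc]
          _ = B * (x * (A1 - 1)) := by rw [h1']
          _ = B * x * (A1 - 1) := by rw [mul_assoc]
      rw [hcdef, sub_mul, key, sub_self]
    have hcA : c * A1 = c := by
      have := hc0
      rw [mul_sub, mul_one, sub_eq_zero] at this
      exact this
    -- coefficient computations
    have hA1single : A1 = MonoidAlgebra.single (DihedralGroup.r (1 : ZMod p)) (1 : F) := rfl
    have hBsingle : B = MonoidAlgebra.single (DihedralGroup.sr (0 : ZMod p)) (1 : F) := rfl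
    -- E1 : the sr-coefficients of x have period 2
    have E1 : ∀ i : ZMod p, x.coeff (DihedralGroup.sr (i + 2)) = x.coeff (DihedralGroup.sr i) := by
      intro i
      have : (x * A1).coeff (DihedralGroup.sr (i + 1)) = (A1 * x).coeff (DihedralGroup.sr (i + 1)) :=
        congrArg (fun z : FG p F => z.coeff (DihedralGroup.sr (i + 1))) h1
      rw [hA1single, MonoidAlgebra.mul_single_apply, MonoidAlgebra.single_mul_apply,
        dih_inv_r, DihedralGroup.sr_mul_r, DihedralGroup.r_mul_sr, mul_one, one_mul] at this
      have e1 : i + 1 + -1 = i := by ring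
      have e2 : i + 1 - -1 = i + 2 := by ring
      rw [e1, e2] at this
      exact this.symm
    -- sr-coefficients of x are constant
    have hconst : ∀ i : ZMod p, x.coeff (DihedralGroup.sr i) = x.coeff (DihedralGroup.sr 0) := by
      have h2unit : (2 : ZMod p) ≠ 0 := by
        intro h
        have : (p : ℤ) ∣ 2 := by
          have := (ZMod.natCast_eq_zero_iff 2 p).mp (by exact_mod_cast h)
          exact_mod_cast this
        have hd : p ∣ 2 := by exact_mod_cast this
        rcases (Nat.prime_two.eq_one_or_self_of_dvd p hd) with h' | h'
        · exact hp.one_lt.ne' h'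
        · subst h'
          exact absurd hodd (by decide)
      have step : ∀ j : ZMod p, x.coeff (DihedralGroup.sr (2 * (j + 1))) = x.coeff (DihedralGroup.sr (2 * j)) := by
        intro j
        have : 2 * (j + 1) = 2 * j + 2 := by ring
        rw [this]
        exact E1 (2 * j)
      intro i
      have h2i : x.coeff (DihedralGroup.sr (2 * (2⁻¹ * i))) = x.coeff (DihedralGroup.sr (2 * 0)) :=
        eq_of_step (fun j => x.coeff (DihedralGroup.sr (2 * j))) step (2⁻¹ * i)
      rw [show (2 : ZMod p) * (2⁻¹ * i) = i by
        rw [← mul_assoc, mul_inv_cancel₀ h2unit, one_mul], mul_zero] at h2i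
      exact h2i
    -- coefficients of c
    have hcsr : ∀ k : ZMod p, c.coeff (DihedralGroup.sr k) = x.coeff (DihedralGroup.r (-k)) - x.coeff (DihedralGroup.r k) := by
      intro k
      rw [hcdef, MonoidAlgebra.coeff_sub, Finsupp.sub_apply, hBsingle, MonoidAlgebra.mul_single_apply,
        MonoidAlgebra.single_mul_apply, dih_inv_sr, DihedralGroup.sr_mul_sr,
        DihedralGroup.sr_mul_sr, mul_one, one_mul,
        show (0 : ZMod p) - k = -k by ring, show k - 0 = k by ring]
    have hcr : ∀ k : ZMod p, c.coeff (DihedralGroup.r k) = 0 := by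
      intro k
      rw [hcdef, MonoidAlgebra.coeff_sub, Finsupp.sub_apply, hBsingle, MonoidAlgebra.mul_single_apply,
        MonoidAlgebra.single_mul_apply, dih_inv_sr, DihedralGroup.r_mul_sr,
        DihedralGroup.sr_mul_r, mul_one, one_mul,
        show (0 : ZMod p) - k = -k by ring, show (0 : ZMod p) + k = k by ring,
        hconst (-k), hconst k, sub_self]
    -- c is constant on sr
    have hcstep : ∀ k : ZMod p, c.coeff (DihedralGroup.sr (k + 1)) = c.coeff (DihedralGroup.sr k) := by
      intro k
      have : (c * A1).coeff (DihedralGroup.sr (k + 1)) = c.coeff (DihedralGroup.sr (k + 1)) :=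
        congrArg (fun z : FG p F => z.coeff (DihedralGroup.sr (k + 1))) hcA
      rw [hA1single, MonoidAlgebra.mul_single_apply, dih_inv_r,
        DihedralGroup.sr_mul_r, mul_one, show k + 1 + -1 = k by ring] at this
      exact this.symm
    have hcsr0 : c.coeff (DihedralGroup.sr 0) = 0 := by
      rw [hcsr 0, neg_zero, sub_self]
    have hcsrz : ∀ k : ZMod p, c.coeff (DihedralGroup.sr k) = 0 := by
      intro k
      have hk : c.coeff (DihedralGroup.sr k) = c.coeff (DihedralGroup.sr 0) :=
        eq_of_step (fun k => c.coeff (DihedralGroup.sr k)) hcstep k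
      rw [hk, hcsr0]
    have hczero : c = 0 := by
      ext g
      rw [MonoidAlgebra.coeff_zero, Finsupp.coe_zero, Pi.zero_apply]
      cases g with
      | r k => exact hcr k
      | sr k => exact hcsrz k
    have hBcomm : x * B = B * x := by
      have := sub_eq_zero.mp hczero
      exact this
    -- x commutes with every group element
    have hof : ∀ g : Dg p, x * of F (Dg p) g = of F (Dg p) g * x := by
      have hr : ∀ i : ZMod p, x * of F (Dg p) (DihedralGroup.r i) = of F (Dg p) (DihedralGroup.r i) * x := by
        intro i
        have hpow : (aa p) ^ (i.val) = DihedralGroup.r i := by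
          rw [aa, DihedralGroup.r_one_pow, ZMod.natCast_zmod_val]
        have : Commute x A1 := h1
        have hcom := this.pow_right i.val
        rw [← hpow, map_pow]
        exact hcom
      intro g
      cases g with
      | r i => exact hr i
      | sr i =>
        have hdec : DihedralGroup.sr i = DihedralGroup.r (-i) * DihedralGroup.sr 0 := by
          rw [DihedralGroup.r_mul_sr]; ring_nf
        rw [hdec, map_mul]
        calc x * (of F (Dg p) (DihedralGroup.r (-i)) * of F (Dg p) (DihedralGroup.sr 0))
            = (x * of F (Dg p) (DihedralGroup.r (-i))) * B := by rw [mul_assoc]; rfl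
          _ = (of F (Dg p) (DihedralGroup.r (-i)) * x) * B := by rw [hr]
          _ = of F (Dg p) (DihedralGroup.r (-i)) * (x * B) := by rw [mul_assoc]
          _ = of F (Dg p) (DihedralGroup.r (-i)) * (B * x) := by rw [hBcomm]
          _ = of F (Dg p) (DihedralGroup.r (-i)) * of F (Dg p) (DihedralGroup.sr 0) * x := by
              rw [mul_assoc]; rfl
    -- conclude for all y by linearity
    intro y
    induction y using MonoidAlgebra.induction_linear with
    | zero => simp
    | add f g hf hg => rw [mul_add, add_mul, hf, hg]
    | single g a =>
      have : (MonoidAlgebra.single g a : FG p F) = a • of F (Dg p) g := by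
        rw [MonoidAlgebra.of_apply, MonoidAlgebra.smul_single', mul_one]
      rw [this, mul_smul_comm, smul_mul_assoc, hof]
  · rintro ⟨hc, ho⟩
    exact ⟨ho, fun y _ => hc y⟩
end
end

section
/- The center of the group 1 + Γ(A) consists exactly of the elements 1 + Σ_{i=1}^{l} α_i (Ĉ_i − 2) + β Â b with α_1, …, α_l, β ∈ F, where l = (p−1)/2, Ĉ_i = a^i + a^{−i}, and Â = 1 + a + ⋯ + a^{p−1}. -/
noncomputable section

open MonoidAlgebra

namespace Aux9
open DihedralGroup

variable (p : ℕ) (F : Type) [Field F]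

lemma aa_pow (i : ℕ) : (aa p) ^ i = DihedralGroup.r (i : ZMod p) := r_one_pow i

lemma inv_r (i : ZMod p) : (DihedralGroup.r i : Dg p)⁻¹ = DihedralGroup.r (-i) := rfl
lemma inv_sr (i : ZMod p) : (DihedralGroup.sr i : Dg p)⁻¹ = DihedralGroup.sr i := rfl

lemma aa_mem : aa p ∈ Asub p := Subgroup.mem_zpowers _

lemma sub_one_mem {h : Dg p} (hh : h ∈ Asub p) :
    of F (Dg p) h - 1 ∈ gammaA p F := Ideal.subset_span ⟨h, hh, rfl⟩

def dgEquiv : (ZMod p ⊕ ZMod p) ≃ Dg p where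
  toFun g := Sum.elim DihedralGroup.r DihedralGroup.sr g
  invFun g := match g with | .r j => .inl j | .sr j => .inr j
  left_inv := by rintro (x|x) <;> rfl
  right_inv := by rintro (x|x) <;> rfl

lemma sum_dg [NeZero p] {M : Type} [AddCommMonoid M] (h : Dg p → M) :
    ∑ g : Dg p, h g
      = (∑ i : ZMod p, h (DihedralGroup.r i)) + ∑ i : ZMod p, h (DihedralGroup.sr i) := by
  rw [← Equiv.sum_comp (dgEquiv p) h, Fintype.sum_sum_type]
  rfl

lemma sum_range_zmod [NeZero p] {M : Type} [AddCommMonoid M] (h : ZMod p → M) :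
    ∑ j ∈ Finset.range p, h (j : ZMod p) = ∑ i : ZMod p, h i := by
  refine Finset.sum_nbij' (fun j => (j : ZMod p)) (fun i => i.val) ?_ ?_ ?_ ?_ ?_
  · intro j hj; exact Finset.mem_univ _
  · intro i _; exact Finset.mem_range.2 (ZMod.val_lt i)
  · intro j hj; exact ZMod.val_cast_of_lt (Finset.mem_range.1 hj)
  · intro i _; exact ZMod.natCast_zmod_val i
  · intro j _; rfl

/-- the sign character -/
def chi : Dg p →* F where
  toFun g := match g with | .r _ => 1 | .sr _ => -1
  map_one' := rfl
  map_mul' := by rintro (i|i) (j|j) <;> simp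

@[simp] lemma chi_r (i : ZMod p) : chi p F (DihedralGroup.r i) = 1 := rfl
@[simp] lemma chi_sr (i : ZMod p) : chi p F (DihedralGroup.sr i) = -1 := rfl

def Em : FG p F →ₐ[F] F := MonoidAlgebra.lift F F (Dg p) (chi p F)
def Ep : FG p F →ₐ[F] F := MonoidAlgebra.lift F F (Dg p) 1

lemma gamma_le_ker : ∀ x ∈ gammaA p F, Ep p F x = 0 ∧ Em p F x = 0 := by
  intro x hx
  have h1 : gammaA p F ≤ RingHom.ker (Ep p F) ⊓ RingHom.ker (Em p F) := by
    rw [gammaA, Ideal.span_le]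
    rintro y ⟨h, hh, rfl⟩
    obtain ⟨k, rfl⟩ := hh
    constructor <;> simp only [SetLike.mem_coe, RingHom.mem_ker, map_sub, map_one]
    · simp [Ep, MonoidAlgebra.lift_single]
    · simp [Em, MonoidAlgebra.lift_single, map_zpow]
      norm_num [aa, map_zpow]
  exact ⟨(h1 hx).1, (h1 hx).2⟩

lemma Ep_apply [NeZero p] (x : FG p F) :
    Ep p F x = (∑ i : ZMod p, x.coeff (DihedralGroup.r i)) + ∑ i : ZMod p, x.coeff (DihedralGroup.sr i) := by
  rw [Ep, MonoidAlgebra.lift_apply, Finsupp.sum_fintype _ _ (by intro; simp), sum_dg]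
  simp

lemma Em_apply [NeZero p] (x : FG p F) :
    Em p F x = (∑ i : ZMod p, x.coeff (DihedralGroup.r i)) - ∑ i : ZMod p, x.coeff (DihedralGroup.sr i) := by
  rw [Em, MonoidAlgebra.lift_apply, Finsupp.sum_fintype _ _ (by intro; simp), sum_dg]
  simp [chi_r, chi_sr, smul_eq_mul, sub_eq_add_neg, Finset.sum_neg_distrib]

lemma Ahat_eq [NeZero p] : Ahat p F = ∑ i : ZMod p, of F (Dg p) (DihedralGroup.r i) := by
  rw [Ahat]
  simp_rw [aa_pow]
  exact sum_range_zmod p (M := FG p F) (fun i => of F (Dg p) (DihedralGroup.r i))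

/-- sum of all reflections -/
def S [NeZero p] : FG p F := ∑ i : ZMod p, of F (Dg p) (DihedralGroup.sr i)
/-- sum of all rotations -/
def R [NeZero p] : FG p F := ∑ i : ZMod p, of F (Dg p) (DihedralGroup.r i)

lemma Ahat_mul_bb [NeZero p] : Ahat p F * of F (Dg p) (bb p) = S p F := by
  rw [Ahat_eq, Finset.sum_mul, S, bb]
  simp_rw [← map_mul, r_mul_sr]
  exact Fintype.sum_equiv (Equiv.neg (ZMod p)) _ _ (by intro i; simp [zero_sub])

lemma bb_mul_Ahat [NeZero p] : of F (Dg p) (bb p) * Ahat p F = S p F := by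
  rw [Ahat_eq, Finset.mul_sum, S, bb]
  simp_rw [← map_mul, sr_mul_r]
  simp [zero_add]

lemma Ahat_mem [NeZero p] [CharP F p] : Ahat p F ∈ gammaA p F := by
  have h0 : Ahat p F = ∑ j ∈ Finset.range p, ((of F (Dg p) ((aa p) ^ j) - 1) + 1) := by
    rw [Ahat]; simp
  rw [h0, Finset.sum_add_distrib, Finset.sum_const, Finset.card_range]
  have hz : (p • (1 : FG p F)) = 0 := by
    rw [nsmul_eq_mul, mul_one]
    have : ((p : ℕ) : FG p F) = algebraMap F (FG p F) ((p : ℕ) : F) := by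
      rw [map_natCast]
    rw [this, CharP.cast_eq_zero F p, map_zero]
  rw [hz, add_zero]
  exact Ideal.sum_mem _ fun j _ =>
    sub_one_mem p F (pow_mem (aa_mem p) j)

/-- a central element commutes with everything -/
lemma central_of (z : FG p F) (h : ∀ g : Dg p, z * of F (Dg p) g = of F (Dg p) g * z) :
    ∀ y : FG p F, z * y = y * z := by
  intro y
  conv_lhs => rw [← MonoidAlgebra.sum_coeff_single y]
  conv_rhs => rw [← MonoidAlgebra.sum_coeff_single y]
  rw [Finsupp.mul_sum, Finsupp.sum_mul]
  refine Finset.sum_congr rfl fun g _ => ?_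
  show z * MonoidAlgebra.single g (y.coeff g) = MonoidAlgebra.single g (y.coeff g) * z
  have : (MonoidAlgebra.single g (y.coeff g)) = y.coeff g • of F (Dg p) g := by
    rw [MonoidAlgebra.of_apply, MonoidAlgebra.smul_single', mul_one]
  rw [this, mul_smul_comm, smul_mul_assoc, h g]

lemma S_comm [NeZero p] (g : Dg p) : S p F * of F (Dg p) g = of F (Dg p) g * S p F := by
  cases g with
  | r j =>
    rw [S, Finset.sum_mul, Finset.mul_sum]
    simp_rw [← map_mul, sr_mul_r, r_mul_sr]
    have hL : ∑ i : ZMod p, of F (Dg p) (DihedralGroup.sr (i + j)) = S p F :=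
      Fintype.sum_equiv (Equiv.addRight j) _ _ (fun i => rfl)
    have hR : ∑ i : ZMod p, of F (Dg p) (DihedralGroup.sr (i - j)) = S p F :=
      Fintype.sum_equiv (Equiv.subRight j) _ _ (fun i => rfl)
    rw [hL, hR]
  | sr j =>
    rw [S, Finset.sum_mul, Finset.mul_sum]
    simp_rw [← map_mul, sr_mul_sr]
    have hL : ∑ i : ZMod p, of F (Dg p) (DihedralGroup.r (j - i)) = R p F :=
      Fintype.sum_equiv (Equiv.subLeft j) _ _ (fun i => rfl)
    have hR : ∑ i : ZMod p, of F (Dg p) (DihedralGroup.r (i - j)) = R p F :=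
      Fintype.sum_equiv (Equiv.subRight j) _ _ (fun i => rfl)
    rw [hL, hR]

lemma Ci_comm (m : ZMod p) (g : Dg p) :
    (of F (Dg p) (DihedralGroup.r m) + of F (Dg p) (DihedralGroup.r (-m))) * of F (Dg p) g
    = of F (Dg p) g * (of F (Dg p) (DihedralGroup.r m) + of F (Dg p) (DihedralGroup.r (-m))) := by
  cases g with
  | r j =>
    rw [add_mul, mul_add]
    simp_rw [← map_mul, r_mul_r]
    rw [add_comm m j, add_comm (-m) j]
  | sr j =>
    rw [add_mul, mul_add]
    simp_rw [← map_mul, r_mul_sr, sr_mul_r]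
    rw [sub_eq_add_neg j m, sub_neg_eq_add, add_comm]

lemma alg_mul_comm (γ : F) (z w : FG p F) (hz : z * w = w * z) :
    (algebraMap F (FG p F) γ * z) * w = w * (algebraMap F (FG p F) γ * z) := by
  rw [mul_assoc, hz, ← mul_assoc, Algebra.commutes γ w, mul_assoc]

lemma comm_coeff {x : FG p F} {g : Dg p} (h : x * of F (Dg p) g = of F (Dg p) g * x)
    (h' : Dg p) : x.coeff (h' * g⁻¹) = x.coeff (g⁻¹ * h') := by
  have : (x * of F (Dg p) g).coeff h' = (of F (Dg p) g * x).coeff h' := by rw [h]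
  rwa [MonoidAlgebra.of_apply, MonoidAlgebra.coeff_mul_single_apply, MonoidAlgebra.coeff_single_mul_apply,
    mul_one, one_mul] at this

lemma algebraMap_mul_apply (γ : F) (z : FG p F) (h : Dg p) :
    (algebraMap F (FG p F) γ * z).coeff h = γ * z.coeff h := by
  rw [← Algebra.smul_def, MonoidAlgebra.coeff_smul_apply, smul_eq_mul]

lemma one_apply (h : Dg p) : (1 : FG p F).coeff h = if (1 : Dg p) = h then 1 else 0 := by
  rw [MonoidAlgebra.one_def, MonoidAlgebra.coeff_single, Finsupp.single_apply]

lemma two_apply (h : Dg p) : (2 : FG p F).coeff h = if (1 : Dg p) = h then 2 else 0 := by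
  rw [MonoidAlgebra.coeff_ofNat, Finsupp.single_apply]

lemma of_apply' (g h : Dg p) : (of F (Dg p) g : FG p F).coeff h = if g = h then 1 else 0 := by
  rw [MonoidAlgebra.of_apply, MonoidAlgebra.coeff_single, Finsupp.single_apply]

lemma S_apply_r [NeZero p] (m : ZMod p) : (S p F).coeff (DihedralGroup.r m) = 0 := by
  rw [S, MonoidAlgebra.coeff_sum, Finset.sum_apply']
  simp [of_apply']

lemma S_apply_sr [NeZero p] (m : ZMod p) : (S p F).coeff (DihedralGroup.sr m) = 1 := by
  rw [S, MonoidAlgebra.coeff_sum, Finset.sum_apply']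
  simp [of_apply', Finsupp.single_apply, Finset.sum_ite_eq']

end Aux9

namespace Aux9
open DihedralGroup
variable (p : ℕ) (F : Type) [Field F]

lemma canon_apply_r [NeZero p] (l : ℕ) (c : ℕ → F) (β : F) (m : ZMod p) :
    (1 + (∑ i ∈ Finset.Icc 1 l, algebraMap F (FG p F) (c i) *
        ((of F (Dg p) ((aa p) ^ i) : FG p F) + of F (Dg p) ((aa p) ^ i)⁻¹ - 2)) +
      algebraMap F (FG p F) β * Ahat p F * of F (Dg p) (bb p)).coeff (DihedralGroup.r m)
    = (if m = 0 then 1 else 0)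
      + ∑ i ∈ Finset.Icc 1 l, c i * ((if ((i : ℕ) : ZMod p) = m then (1:F) else 0)
          + (if -((i : ℕ) : ZMod p) = m then 1 else 0) - (if m = 0 then 2 else 0)) := by
  rw [mul_assoc, Ahat_mul_bb]
  rw [MonoidAlgebra.coeff_add, MonoidAlgebra.coeff_add, Finsupp.add_apply, Finsupp.add_apply, algebraMap_mul_apply, S_apply_r, mul_zero, add_zero]
  rw [MonoidAlgebra.coeff_sum, Finset.sum_apply']
  congr 1
  · rw [one_apply, DihedralGroup.one_def]
    simp only [DihedralGroup.r.injEq]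
    simp [eq_comm]
  · refine Finset.sum_congr rfl fun i _ => ?_
    rw [algebraMap_mul_apply]
    congr 1
    rw [MonoidAlgebra.coeff_sub, MonoidAlgebra.coeff_add, Finsupp.sub_apply, Finsupp.add_apply, aa_pow,
      show ((DihedralGroup.r ((i : ℕ) : ZMod p) : Dg p))⁻¹
         = DihedralGroup.r (-((i : ℕ) : ZMod p)) from rfl,
      of_apply', of_apply', two_apply, DihedralGroup.one_def]
    simp only [DihedralGroup.r.injEq]
    congr 1
    simp [eq_comm]

lemma canon_apply_sr [NeZero p] (l : ℕ) (c : ℕ → F) (β : F) (m : ZMod p) :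
    (1 + (∑ i ∈ Finset.Icc 1 l, algebraMap F (FG p F) (c i) *
        ((of F (Dg p) ((aa p) ^ i) : FG p F) + of F (Dg p) ((aa p) ^ i)⁻¹ - 2)) +
      algebraMap F (FG p F) β * Ahat p F * of F (Dg p) (bb p)).coeff (DihedralGroup.sr m)
    = β := by
  rw [mul_assoc, Ahat_mul_bb]
  rw [MonoidAlgebra.coeff_add, MonoidAlgebra.coeff_add, Finsupp.add_apply, Finsupp.add_apply, algebraMap_mul_apply, S_apply_sr, mul_one]
  rw [MonoidAlgebra.coeff_sum, Finset.sum_apply']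
  have h1 : (1 : FG p F).coeff (DihedralGroup.sr m) = 0 := by
    rw [one_apply, DihedralGroup.one_def]; simp
    exact if_neg fun h => nomatch (show (DihedralGroup.r 0 : Dg p) = DihedralGroup.sr m from h)
  rw [h1]
  have h2 : ∀ i ∈ Finset.Icc 1 l, (algebraMap F (FG p F) (c i) *
        ((of F (Dg p) ((aa p) ^ i) : FG p F) + of F (Dg p) ((aa p) ^ i)⁻¹ - 2)).coeff
        (DihedralGroup.sr m) = 0 := by
    intro i _
    rw [algebraMap_mul_apply]
    rw [MonoidAlgebra.coeff_sub, MonoidAlgebra.coeff_add, Finsupp.sub_apply, Finsupp.add_apply, aa_pow,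
      show ((DihedralGroup.r ((i : ℕ) : ZMod p) : Dg p))⁻¹
         = DihedralGroup.r (-((i : ℕ) : ZMod p)) from rfl,
      of_apply', of_apply', two_apply, DihedralGroup.one_def]
    simp
    exact Or.inr (if_neg fun h => nomatch (show (DihedralGroup.r 0 : Dg p) = DihedralGroup.sr m from h))
  rw [Finset.sum_congr rfl h2, Finset.sum_const_zero]
  ring

set_option maxHeartbeats 1000000 in
lemma canon_mem [NeZero p] [CharP F p] (l : ℕ) (c : ℕ → F) (β : F) :
    (1 + (∑ i ∈ Finset.Icc 1 l, algebraMap F (FG p F) (c i) *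
        ((of F (Dg p) ((aa p) ^ i) : FG p F) + of F (Dg p) ((aa p) ^ i)⁻¹ - 2)) +
      algebraMap F (FG p F) β * Ahat p F * of F (Dg p) (bb p)) ∈ Zcen p F := by
  simp only [Zcen, oneGamma, Set.mem_setOf_eq]
  constructor
  · have he : (1 + (∑ i ∈ Finset.Icc 1 l, algebraMap F (FG p F) (c i) *
        ((of F (Dg p) ((aa p) ^ i) : FG p F) + of F (Dg p) ((aa p) ^ i)⁻¹ - 2)) +
      algebraMap F (FG p F) β * Ahat p F * of F (Dg p) (bb p)) - 1
      = (∑ i ∈ Finset.Icc 1 l, algebraMap F (FG p F) (c i) *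
        ((of F (Dg p) ((aa p) ^ i) : FG p F) + of F (Dg p) ((aa p) ^ i)⁻¹ - 2)) +
      algebraMap F (FG p F) β * Ahat p F * of F (Dg p) (bb p) := by abel
    rw [he]
    refine Ideal.add_mem _ (Ideal.sum_mem _ fun i _ => Ideal.mul_mem_left _ _ ?_) ?_
    · have he2 : (of F (Dg p) ((aa p) ^ i) : FG p F) + of F (Dg p) ((aa p) ^ i)⁻¹ - 2
          = ((of F (Dg p) ((aa p) ^ i) : FG p F) - 1)
            + (of F (Dg p) (((aa p) ^ i)⁻¹) - 1) := by
        rw [show (2 : FG p F) = 1 + 1 from one_add_one_eq_two.symm]; abel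
      rw [he2]
      exact Ideal.add_mem _ (sub_one_mem p F (pow_mem (aa_mem p) i))
        (sub_one_mem p F (inv_mem (pow_mem (aa_mem p) i)))
    · rw [mul_assoc (algebraMap F (FG p F) β), Ahat_mul_bb, ← bb_mul_Ahat]
      exact Ideal.mul_mem_left _ _ (Ideal.mul_mem_left _ _ (Ahat_mem p F))
  · intro y hy
    refine central_of p F _ ?_ y
    intro g
    have hA : (∑ i ∈ Finset.Icc 1 l, algebraMap F (FG p F) (c i) *
        ((of F (Dg p) ((aa p) ^ i) : FG p F) + of F (Dg p) ((aa p) ^ i)⁻¹ - 2)) * of F (Dg p) g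
        = of F (Dg p) g * (∑ i ∈ Finset.Icc 1 l, algebraMap F (FG p F) (c i) *
        ((of F (Dg p) ((aa p) ^ i) : FG p F) + of F (Dg p) ((aa p) ^ i)⁻¹ - 2)) := by
      rw [Finset.sum_mul, Finset.mul_sum]
      refine Finset.sum_congr rfl fun i _ => ?_
      refine alg_mul_comm p F _ _ _ ?_
      rw [aa_pow, show ((DihedralGroup.r ((i : ℕ) : ZMod p) : Dg p))⁻¹
         = DihedralGroup.r (-((i : ℕ) : ZMod p)) from rfl]
      rw [sub_mul, mul_sub, Ci_comm]
      congr 1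
      rw [two_mul, mul_two]
    have hB : (algebraMap F (FG p F) β * Ahat p F * of F (Dg p) (bb p)) * of F (Dg p) g
        = of F (Dg p) g * (algebraMap F (FG p F) β * Ahat p F * of F (Dg p) (bb p)) := by
      rw [mul_assoc (algebraMap F (FG p F) β), Ahat_mul_bb]
      exact alg_mul_comm p F _ _ _ (S_comm p F g)
    rw [add_mul, add_mul, mul_add, mul_add, one_mul, mul_one, hA, hB]

end Aux9

set_option maxHeartbeats 1000000 in
/-- `Z(1 + Γ(A))` consists exactly of the elements
`1 + Σ_{i=1}^{l} α_i (Ĉ_i - 2) + β Â b` with coefficients in `F`, where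
`Ĉ_i = a^i + a^{-i}` and `l = (p-1)/2`. -/
theorem stmt9 (p : ℕ) (hp : p.Prime) (hodd : Odd p)
    (F : Type) [Field F] [Fintype F] [CharP F p] :
    ∀ l : ℕ, l = (p - 1) / 2 →
    Zcen p F = {x : FG p F | ∃ (c : ℕ → F) (β : F),
      x = 1 +
        (∑ i ∈ Finset.Icc 1 l, algebraMap F (FG p F) (c i) *
          ((of F (Dg p) ((aa p) ^ i) : FG p F) + of F (Dg p) ((aa p) ^ i)⁻¹ - 2)) +
        algebraMap F (FG p F) β * Ahat p F * of F (Dg p) (bb p)} := by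

  intro l hl
  haveI : Fact p.Prime := ⟨hp⟩
  haveI : NeZero p := ⟨hp.ne_zero⟩
  have hp2 : p ≠ 2 := by rintro rfl; obtain ⟨k, hk⟩ := hodd; omega
  have hp3 : 3 ≤ p := by have := hp.two_le; omega
  have hpl : p = 2 * l + 1 := by obtain ⟨k, hk⟩ := hodd; omega
  have h2F : (2 : F) ≠ 0 := by
    intro h
    have h2 : ((2 : ℕ) : F) = 0 := by exact_mod_cast h
    have hd := (CharP.cast_eq_zero_iff F p 2).1 h2
    have := Nat.le_of_dvd (by norm_num) hd
    omega
  have h2Z : (2 : ZMod p) ≠ 0 := by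
    intro h
    have h2 : ((2 : ℕ) : ZMod p) = 0 := by exact_mod_cast h
    have hd := (ZMod.natCast_eq_zero_iff 2 p).1 h2
    have := Nat.le_of_dvd (by norm_num) hd
    omega
  ext x
  simp only [Zcen, oneGamma, Set.mem_setOf_eq]
  constructor
  · rintro ⟨hx1, hx2⟩
    -- commutation with a = r 1
    have ha := hx2 (of F (Dg p) (DihedralGroup.r 1))
      (by rw [show (of F (Dg p) (DihedralGroup.r 1) : FG p F) - 1
                = of F (Dg p) (aa p) - 1 from rfl]
          exact Aux9.sub_one_mem p F (Aux9.aa_mem p))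
    have hco := Aux9.comm_coeff p F ha
    have gstep : ∀ j : ZMod p, x.coeff (DihedralGroup.sr j) = x.coeff (DihedralGroup.sr (j + 2)) := by
      intro j
      have h := hco (DihedralGroup.sr (j + 1))
      rw [Aux9.inv_r] at h
      rw [DihedralGroup.sr_mul_r, DihedralGroup.r_mul_sr] at h
      have e1 : j + 1 + -1 = j := by ring
      have e2 : j + 1 - -1 = j + 2 := by ring
      rw [e1, e2] at h
      exact h
    have gconst : ∀ j : ZMod p, x.coeff (DihedralGroup.sr j) = x.coeff (DihedralGroup.sr 0) := by
      have hnat : ∀ n : ℕ, x.coeff (DihedralGroup.sr ((2 * n : ℕ) : ZMod p))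
          = x.coeff (DihedralGroup.sr 0) := by
        intro n
        induction n with
        | zero => norm_num
        | succ n ih =>
          have e : ((2 * (n + 1) : ℕ) : ZMod p) = ((2 * n : ℕ) : ZMod p) + 2 := by
            push_cast; ring
          rw [e, ← gstep]
          exact ih
      intro j
      have hk : (2 : ZMod p) * ((2⁻¹ : ZMod p) * j) = j := by
        rw [← mul_assoc, mul_inv_cancel₀ h2Z, one_mul]
      have h := hnat ((2⁻¹ : ZMod p) * j).val
      have e : ((2 * ((2⁻¹ : ZMod p) * j).val : ℕ) : ZMod p) = j := by
        rw [Nat.cast_mul, Nat.cast_ofNat, ZMod.natCast_zmod_val]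
        exact hk
      rw [e] at h
      exact h
    -- commutation with 1 + b(a⁻¹ - 1)
    have hw0 := hx2 (1 + of F (Dg p) (DihedralGroup.sr 0) *
        (of F (Dg p) (DihedralGroup.r (-1)) - 1))
      (by rw [add_sub_cancel_left]
          refine Ideal.mul_mem_left _ _ (Aux9.sub_one_mem p F ?_)
          rw [show (DihedralGroup.r (-1) : Dg p) = (aa p)⁻¹ from rfl]
          exact inv_mem (Aux9.aa_mem p))
    have hcw : x * (of F (Dg p) (DihedralGroup.sr (-1)) - of F (Dg p) (DihedralGroup.sr 0))
        = (of F (Dg p) (DihedralGroup.sr (-1)) - of F (Dg p) (DihedralGroup.sr 0)) * x := by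
      have hwe : of F (Dg p) (DihedralGroup.sr 0) * (of F (Dg p) (DihedralGroup.r (-1)) - 1)
          = of F (Dg p) (DihedralGroup.sr (-1)) - of F (Dg p) (DihedralGroup.sr 0) := by
        rw [mul_sub, mul_one, ← map_mul, DihedralGroup.sr_mul_r, zero_add]
      rw [← hwe]
      rw [mul_add, add_mul, mul_one, one_mul] at hw0
      exact add_left_cancel hw0
    have rel : ∀ m : ZMod p, x.coeff (DihedralGroup.r (-1 - m)) - x.coeff (DihedralGroup.r (-m))
        = x.coeff (DihedralGroup.r (m + 1)) - x.coeff (DihedralGroup.r m) := by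
      intro m
      have h : (x * (of F (Dg p) (DihedralGroup.sr (-1))
            - of F (Dg p) (DihedralGroup.sr 0))).coeff (DihedralGroup.sr m)
          = ((of F (Dg p) (DihedralGroup.sr (-1))
            - of F (Dg p) (DihedralGroup.sr 0)) * x).coeff (DihedralGroup.sr m) := by
        rw [hcw]
      rw [mul_sub, sub_mul, MonoidAlgebra.coeff_sub, MonoidAlgebra.coeff_sub, Finsupp.sub_apply, Finsupp.sub_apply] at h
      simp only [MonoidAlgebra.of_apply, MonoidAlgebra.coeff_mul_single_apply,
        MonoidAlgebra.coeff_single_mul_apply, mul_one, one_mul, Aux9.inv_sr,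
        DihedralGroup.sr_mul_sr] at h
      rw [zero_sub, sub_neg_eq_add, sub_zero] at h
      exact h
    have fsymm : ∀ m : ZMod p, x.coeff (DihedralGroup.r (-m)) = x.coeff (DihedralGroup.r m) := by
      have hnat : ∀ n : ℕ, x.coeff (DihedralGroup.r (-((n : ℕ) : ZMod p)))
          = x.coeff (DihedralGroup.r ((n : ℕ) : ZMod p)) := by
        intro n
        induction n with
        | zero => norm_num
        | succ n ih =>
          have h := rel ((n : ℕ) : ZMod p)
          have e1 : (-1 : ZMod p) - ((n : ℕ) : ZMod p) = -(((n + 1 : ℕ) : ZMod p)) := by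
            push_cast; ring
          have e2 : (((n : ℕ) : ZMod p)) + 1 = (((n + 1 : ℕ) : ZMod p)) := by
            push_cast; ring
          rw [e1, e2] at h
          linear_combination h + ih
      intro m
      have h := hnat m.val
      rwa [ZMod.natCast_zmod_val] at h
    have hsum : ∑ i : ZMod p, x.coeff (DihedralGroup.r i) = 1 := by
      obtain ⟨hEp, hEm⟩ := Aux9.gamma_le_ker p F _ hx1
      rw [map_sub, map_one, sub_eq_zero, Aux9.Ep_apply] at hEp
      rw [map_sub, map_one, sub_eq_zero, Aux9.Em_apply] at hEm
      have h2 : (2 : F) * (∑ i : ZMod p, x.coeff (DihedralGroup.r i)) = 2 * 1 := by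
        linear_combination hEp + hEm
      exact mul_left_cancel₀ h2F h2
    have hsplit : ∑ i : ZMod p, x.coeff (DihedralGroup.r i)
        = x.coeff (DihedralGroup.r 0)
          + 2 * ∑ i ∈ Finset.Icc 1 l, x.coeff (DihedralGroup.r ((i : ℕ) : ZMod p)) := by
      rw [← Aux9.sum_range_zmod p (M := F) (fun i => x.coeff (DihedralGroup.r i))]
      rw [Finset.range_eq_Ico,
        ← Finset.sum_Ico_consecutive (fun j : ℕ => x.coeff (DihedralGroup.r ((j : ℕ) : ZMod p)))
          (show (0:ℕ) ≤ 1 by omega) (show 1 ≤ p by omega),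
        ← Finset.sum_Ico_consecutive (fun j : ℕ => x.coeff (DihedralGroup.r ((j : ℕ) : ZMod p)))
          (show (1:ℕ) ≤ l + 1 by omega) (show l + 1 ≤ p by omega)]
      have h0 : ∑ j ∈ Finset.Ico 0 1, x.coeff (DihedralGroup.r ((j : ℕ) : ZMod p))
          = x.coeff (DihedralGroup.r 0) := by
        rw [Nat.Ico_zero_eq_range, Finset.sum_range_one]
        norm_num
      have h1 : ∑ j ∈ Finset.Ico 1 (l + 1), x.coeff (DihedralGroup.r ((j : ℕ) : ZMod p))
          = ∑ i ∈ Finset.Icc 1 l, x.coeff (DihedralGroup.r ((i : ℕ) : ZMod p)) := by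
        rw [Finset.Ico_add_one_right_eq_Icc]
      have h2 : ∑ j ∈ Finset.Ico (l + 1) p, x.coeff (DihedralGroup.r ((j : ℕ) : ZMod p))
          = ∑ i ∈ Finset.Icc 1 l, x.coeff (DihedralGroup.r ((i : ℕ) : ZMod p)) := by
        refine Finset.sum_nbij' (fun n => p - n) (fun i => p - i) ?_ ?_ ?_ ?_ ?_
        · intro n hn; simp only [Finset.mem_Ico, Finset.mem_Icc] at hn ⊢; omega
        · intro i hi; simp only [Finset.mem_Ico, Finset.mem_Icc] at hi ⊢; omega
        · intro n hn
          simp only [Finset.mem_Ico] at hn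
          show p - (p - n) = n
          omega
        · intro i hi
          simp only [Finset.mem_Icc] at hi
          show p - (p - i) = i
          omega
        · intro n hn
          simp only [Finset.mem_Ico] at hn
          show x.coeff (DihedralGroup.r ((n : ℕ) : ZMod p))
              = x.coeff (DihedralGroup.r (((p - n : ℕ) : ℕ) : ZMod p))
          have e : (((p - n : ℕ) : ℕ) : ZMod p) = -((n : ℕ) : ZMod p) := by
            rw [Nat.cast_sub (le_of_lt hn.2), ZMod.natCast_self, zero_sub]
          rw [e, fsymm]
      rw [h0, h1, h2]
      ring
    refine ⟨fun i => x.coeff (DihedralGroup.r ((i : ℕ) : ZMod p)), x.coeff (DihedralGroup.sr 0), ?_⟩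
    refine MonoidAlgebra.ext (Finsupp.ext fun h => ?_)
    cases h with
    | sr m =>
      rw [Aux9.canon_apply_sr]
      exact gconst m
    | r m =>
      rw [Aux9.canon_apply_r]
      by_cases hm : m = 0
      · subst hm
        rw [if_pos (rfl : (0 : ZMod p) = 0)]
        have hterm : ∀ i ∈ Finset.Icc 1 l,
            x.coeff (DihedralGroup.r ((i : ℕ) : ZMod p)) *
              ((if ((i : ℕ) : ZMod p) = 0 then (1:F) else 0)
                + (if -((i : ℕ) : ZMod p) = 0 then (1:F) else 0)
                - (if (0 : ZMod p) = 0 then (2:F) else 0))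
            = -2 * x.coeff (DihedralGroup.r ((i : ℕ) : ZMod p)) := by
          intro i hi
          simp only [Finset.mem_Icc] at hi
          have hne : ((i : ℕ) : ZMod p) ≠ 0 := by
            intro h0
            have := Nat.le_of_dvd (by omega) ((ZMod.natCast_eq_zero_iff i p).1 h0)
            omega
          rw [if_neg hne, if_neg (fun hx0 => hne (neg_eq_zero.1 hx0)), if_pos rfl]
          ring
        rw [Finset.sum_congr rfl hterm, ← Finset.mul_sum]
        linear_combination hsum - hsplit
      · rw [if_neg hm]
        have hv0 : m.val ≠ 0 := fun h => hm ((ZMod.val_eq_zero m).1 h)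
        have hvp : m.val < p := ZMod.val_lt m
        by_cases hvl : m.val ≤ l
        · have hterm : ∀ i ∈ Finset.Icc 1 l,
              x.coeff (DihedralGroup.r ((i : ℕ) : ZMod p)) *
                ((if ((i : ℕ) : ZMod p) = m then (1:F) else 0)
                  + (if -((i : ℕ) : ZMod p) = m then (1:F) else 0)
                  - (if m = 0 then (2:F) else 0))
              = if i = m.val then x.coeff (DihedralGroup.r m) else 0 := by
            intro i hi
            simp only [Finset.mem_Icc] at hi
            have hB : ¬(-((i : ℕ) : ZMod p) = m) := by
              intro hcontra
              have he : ((p - i : ℕ) : ZMod p) = m := by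
                rw [Nat.cast_sub (by omega), ZMod.natCast_self, zero_sub]
                exact hcontra
              have := congrArg ZMod.val he
              rw [ZMod.val_cast_of_lt (by omega)] at this
              omega
            by_cases hi0 : i = m.val
            · subst hi0
              rw [if_pos (ZMod.natCast_zmod_val m), if_neg hB, if_neg hm, if_pos rfl,
                ZMod.natCast_zmod_val]
              ring
            · have hA : ¬(((i : ℕ) : ZMod p) = m) := by
                intro hcontra
                have := congrArg ZMod.val hcontra
                rw [ZMod.val_cast_of_lt (by omega)] at this
                omega
              rw [if_neg hA, if_neg hB, if_neg hm, if_neg hi0]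
              ring
          rw [Finset.sum_congr rfl hterm, Finset.sum_ite_eq',
            if_pos (Finset.mem_Icc.2 ⟨by omega, hvl⟩), zero_add]
        · have hterm : ∀ i ∈ Finset.Icc 1 l,
              x.coeff (DihedralGroup.r ((i : ℕ) : ZMod p)) *
                ((if ((i : ℕ) : ZMod p) = m then (1:F) else 0)
                  + (if -((i : ℕ) : ZMod p) = m then (1:F) else 0)
                  - (if m = 0 then (2:F) else 0))
              = if i = p - m.val then x.coeff (DihedralGroup.r m) else 0 := by
            intro i hi
            simp only [Finset.mem_Icc] at hi
            have hA : ¬(((i : ℕ) : ZMod p) = m) := by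
              intro hcontra
              have := congrArg ZMod.val hcontra
              rw [ZMod.val_cast_of_lt (by omega)] at this
              omega
            by_cases hi0 : i = p - m.val
            · subst hi0
              have hc : (((p - m.val : ℕ) : ℕ) : ZMod p) = -m := by
                rw [Nat.cast_sub (le_of_lt hvp), ZMod.natCast_self, zero_sub,
                  ZMod.natCast_zmod_val]
              rw [if_neg hA, if_pos (by rw [hc, neg_neg]), if_neg hm, if_pos rfl, hc, fsymm]
              ring
            · have hB : ¬(-((i : ℕ) : ZMod p) = m) := by
                intro hcontra
                have he : ((p - i : ℕ) : ZMod p) = m := by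
                  rw [Nat.cast_sub (by omega), ZMod.natCast_self, zero_sub]
                  exact hcontra
                have := congrArg ZMod.val he
                rw [ZMod.val_cast_of_lt (by omega)] at this
                omega
              rw [if_neg hA, if_neg hB, if_neg hm, if_neg hi0]
              ring
          rw [Finset.sum_congr rfl hterm, Finset.sum_ite_eq',
            if_pos (Finset.mem_Icc.2 ⟨by omega, by omega⟩), zero_add]
  · rintro ⟨c, β, rfl⟩
    exact Aux9.canon_mem p F l c β
end
end

section
/- The center Z(1 + Γ(A)) of the group 1 + Γ(A) is the internal direct product of the group S_*(FA) of symmetric normalized units of FA with the group 1 + FÂb = { 1 + β Â b : β ∈ F }: every element of Z(1 + Γ(A)) is uniquely a product of an element of S_*(FA) and an element of 1 + FÂb, and these two subgroups commute elementwise and intersect trivially. -/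
noncomputable section

open MonoidAlgebra

/-- The group `1 + FÂb = {1 + β Â b : β ∈ F}`. -/
def oneFAb (p : ℕ) (F : Type) [Field F] : Set (FG p F) :=
  {x | ∃ β : F, x = 1 + algebraMap F (FG p F) β * Ahat p F * of F (Dg p) (bb p)}

instance (p : ℕ) (F : Type) [Field F] : CoeFun (FG p F) (fun _ => Dg p → F) :=
  ⟨fun x => x.coeff⟩

namespace S10
open DihedralGroup Finsupp

variable {p : ℕ} {F : Type} [Field F]

@[simp] lemma inv_r (i : ZMod p) : (r i : Dg p)⁻¹ = r (-i) := rfl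
@[simp] lemma inv_sr (i : ZMod p) : (sr i : Dg p)⁻¹ = sr i := rfl

lemma app_congr {α M : Type*} [Semiring M] {f g : MonoidAlgebra M α} (h : f = g) (a : α) :
    f.coeff a = g.coeff a := by
  rw [h]

lemma invo_apply (x : FG p F) (g : Dg p) : invo p F x g = x g⁻¹ := rfl

section basic
variable [NeZero p]

/-- rotation-supported element with coefficients `c`. -/
def RT (p : ℕ) (F : Type) [Field F] [NeZero p] (c : ZMod p → F) : FG p F :=
  ∑ i : ZMod p, MonoidAlgebra.single (r i) (c i)

/-- reflection-supported element with coefficients `d`. -/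
def SR (p : ℕ) (F : Type) [Field F] [NeZero p] (d : ZMod p → F) : FG p F :=
  ∑ i : ZMod p, MonoidAlgebra.single (sr i) (d i)

@[simp] lemma RT_apply_r (c : ZMod p → F) (j : ZMod p) : RT p F c (r j) = c j := by
  rw [RT, MonoidAlgebra.coeff_sum, Finsupp.finset_sum_apply]
  simp [MonoidAlgebra.coeff_single, Finsupp.single_apply]

@[simp] lemma RT_apply_sr (c : ZMod p → F) (j : ZMod p) : RT p F c (sr j) = 0 := by
  rw [RT, MonoidAlgebra.coeff_sum, Finsupp.finset_sum_apply]
  simp [MonoidAlgebra.coeff_single, Finsupp.single_apply]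

@[simp] lemma SR_apply_r (d : ZMod p → F) (j : ZMod p) : SR p F d (r j) = 0 := by
  rw [SR, MonoidAlgebra.coeff_sum, Finsupp.finset_sum_apply]
  simp [MonoidAlgebra.coeff_single, Finsupp.single_apply]

@[simp] lemma SR_apply_sr (d : ZMod p → F) (j : ZMod p) : SR p F d (sr j) = d j := by
  rw [SR, MonoidAlgebra.coeff_sum, Finsupp.finset_sum_apply]
  simp [MonoidAlgebra.coeff_single, Finsupp.single_apply]

lemma decomp (x : FG p F) : x = RT p F (fun i => x (r i)) + SR p F (fun i => x (sr i)) := by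
  ext g
  rw [MonoidAlgebra.coeff_add, Finsupp.add_apply]
  rcases g with i | i <;> simp

lemma decomp' (x : FG p F) : ∃ c d : ZMod p → F, x = RT p F c + SR p F d :=
  ⟨_, _, decomp x⟩

end basic
end S10
namespace S10
open DihedralGroup Finsupp
variable {p : ℕ} {F : Type} [Field F] [NeZero p]

lemma RT_mul_RT (c e : ZMod p → F) : RT p F c * RT p F e = RT p F e * RT p F c := by
  simp only [RT]
  rw [Finset.sum_mul_sum, Finset.sum_mul_sum]
  simp only [MonoidAlgebra.single_mul_single, r_mul_r]
  rw [Finset.sum_comm]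
  exact Finset.sum_congr rfl fun i _ => Finset.sum_congr rfl fun j _ => by
    rw [add_comm, mul_comm]

lemma RT_mul_SR_of_symm (c d : ZMod p → F) (hc : ∀ i, c (-i) = c i) :
    RT p F c * SR p F d = SR p F d * RT p F c := by
  simp only [RT, SR]
  rw [Finset.sum_mul_sum, Finset.sum_mul_sum]
  simp only [MonoidAlgebra.single_mul_single, r_mul_sr, sr_mul_r]
  rw [Finset.sum_comm]
  refine Finset.sum_congr rfl fun j _ => ?_
  refine Fintype.sum_equiv (Equiv.neg (ZMod p)) _ _ fun i => ?_
  simp only [Equiv.neg_apply]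
  rw [hc, ← sub_eq_add_neg, mul_comm]

lemma SR_one_mul_RT (c : ZMod p → F) :
    SR p F (fun _ => 1) * RT p F c = (∑ i, c i) • SR p F (fun _ => 1) := by
  simp only [RT, SR]
  rw [Finset.sum_mul_sum, Finset.sum_comm, Finset.sum_smul]
  refine Finset.sum_congr rfl fun j _ => ?_
  rw [Finset.smul_sum]
  refine Fintype.sum_equiv (Equiv.addRight j) _ _ fun i => ?_
  simp only [Equiv.coe_addRight, MonoidAlgebra.single_mul_single, sr_mul_r,
    MonoidAlgebra.smul_single', one_mul, mul_one]

lemma RT_mul_SR_one (c : ZMod p → F) :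
    RT p F c * SR p F (fun _ => 1) = (∑ i, c i) • SR p F (fun _ => 1) := by
  simp only [RT, SR]
  rw [Finset.sum_mul_sum, Finset.sum_smul]
  refine Finset.sum_congr rfl fun i _ => ?_
  rw [Finset.smul_sum]
  refine Fintype.sum_equiv (Equiv.subRight i) _ _ fun j => ?_
  simp only [Equiv.subRight_apply, MonoidAlgebra.single_mul_single, r_mul_sr,
    MonoidAlgebra.smul_single', one_mul, mul_one]

lemma SR_one_mul_SR (d : ZMod p → F) :
    SR p F (fun _ => 1) * SR p F d = (∑ i, d i) • RT p F (fun _ => 1) := by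
  simp only [RT, SR]
  rw [Finset.sum_mul_sum, Finset.sum_comm, Finset.sum_smul]
  refine Finset.sum_congr rfl fun j _ => ?_
  rw [Finset.smul_sum]
  refine Fintype.sum_equiv (Equiv.subLeft j) _ _ fun i => ?_
  simp only [Equiv.subLeft_apply, MonoidAlgebra.single_mul_single, sr_mul_sr,
    MonoidAlgebra.smul_single', one_mul, mul_one]

lemma SR_mul_SR_one (d : ZMod p → F) :
    SR p F d * SR p F (fun _ => 1) = (∑ i, d i) • RT p F (fun _ => 1) := by
  simp only [RT, SR]
  rw [Finset.sum_mul_sum, Finset.sum_smul]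
  refine Finset.sum_congr rfl fun i _ => ?_
  rw [Finset.smul_sum]
  refine Fintype.sum_equiv (Equiv.subRight i) _ _ fun j => ?_
  simp only [Equiv.subRight_apply, MonoidAlgebra.single_mul_single, sr_mul_sr,
    MonoidAlgebra.smul_single', one_mul, mul_one]

lemma RT_one_mul_b :
    RT p F (fun _ => 1) * MonoidAlgebra.single (sr 0 : Dg p) (1 : F) = SR p F (fun _ => 1) := by
  simp only [RT, SR]
  rw [Finset.sum_mul]
  refine Fintype.sum_equiv (Equiv.neg (ZMod p)) _ _ fun i => ?_
  simp only [Equiv.neg_apply, MonoidAlgebra.single_mul_single, r_mul_sr, mul_one, zero_sub]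

end S10
namespace S10
open DihedralGroup Finsupp
variable {p : ℕ} {F : Type} [Field F] [NeZero p]

lemma symm_central (c : ZMod p → F) (hc : ∀ i, c (-i) = c i) (y : FG p F) :
    RT p F c * y = y * RT p F c := by
  obtain ⟨e, d, hy⟩ := decomp' y
  rw [hy, mul_add, add_mul, RT_mul_RT, RT_mul_SR_of_symm c d hc]

lemma SR_one_central (y : FG p F) :
    SR p F (fun _ => 1) * y = y * SR p F (fun _ => 1) := by
  obtain ⟨e, d, hy⟩ := decomp' y
  rw [hy, mul_add, add_mul, SR_one_mul_RT, RT_mul_SR_one, SR_one_mul_SR, SR_mul_SR_one]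

lemma sum_range_cast {M : Type*} [AddCommMonoid M] (f : ZMod p → M) :
    ∑ j ∈ Finset.range p, f (j : ZMod p) = ∑ i : ZMod p, f i := by
  refine Finset.sum_nbij' (fun j => ((j : ZMod p))) (fun i => i.val) ?_ ?_ ?_ ?_ ?_ <;>
    intros <;> simp_all [ZMod.val_cast_of_lt, ZMod.natCast_zmod_val, ZMod.val_lt, Nat.mod_eq_of_lt]

lemma Ahat_eq : Ahat p F = RT p F (fun _ => 1) := by
  rw [Ahat, RT, ← sum_range_cast (fun i => MonoidAlgebra.single (r i) (1 : F))]
  refine Finset.sum_congr rfl fun j _ => ?_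
  rw [MonoidAlgebra.of_apply, aa, r_one_pow]

lemma b_eq : MonoidAlgebra.of F (Dg p) (bb p) = MonoidAlgebra.single (sr 0 : Dg p) (1 : F) := rfl

/-- `1 + β Â b = 1 + β • SR 1`. -/
lemma t_eq (β : F) :
    (1 : FG p F) + algebraMap F (FG p F) β * Ahat p F * MonoidAlgebra.of F (Dg p) (bb p)
      = 1 + β • SR p F (fun _ => 1) := by
  rw [Ahat_eq, b_eq, ← Algebra.smul_def, Algebra.smul_mul_assoc, RT_one_mul_b]

def dgEquiv (p : ℕ) : (ZMod p ⊕ ZMod p) ≃ Dg p where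
  toFun s := Sum.elim r sr s
  invFun g := match g with | .r i => .inl i | .sr i => .inr i
  left_inv := by rintro (i | i) <;> rfl
  right_inv := by rintro (i | i) <;> rfl

lemma aug_eq (x : FG p F) : aug p F x = (∑ i, x (r i)) + ∑ i, x (sr i) := by
  rw [aug, Finsupp.sum_fintype _ _ (fun _ => rfl), ← Equiv.sum_comp (dgEquiv p) (fun g => x g),
    Fintype.sum_sum_type]
  rfl

lemma r_mem_Asub (i : ZMod p) : r i ∈ Asub p := by
  refine Subgroup.mem_zpowers_iff.mpr ⟨(i.val : ℤ), ?_⟩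
  rw [zpow_natCast, aa, r_one_pow, ZMod.natCast_zmod_val]

lemma aa_zpow (k : ℤ) : (aa p) ^ k = r (k : ZMod p) := by
  rcases k with n | n
  · rw [Int.ofNat_eq_coe, zpow_natCast, aa, r_one_pow]
    norm_cast
  · rw [zpow_negSucc, aa, r_one_pow, inv_r]
    congr 1
    push_cast
    ring

lemma sr_not_mem_Asub (i : ZMod p) : sr i ∉ Asub p := by
  intro h
  obtain ⟨k, hk⟩ := Subgroup.mem_zpowers_iff.mp h
  rw [aa_zpow] at hk
  exact absurd hk (by simp)

lemma memFA_sr_eq_zero {x : FG p F} (hx : memFA p F x) (i : ZMod p) : x (sr i) = 0 := by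
  by_contra h
  exact sr_not_mem_Asub i (hx _ (Finsupp.mem_support_iff.mpr h))

lemma memFA_eq_RT {x : FG p F} (hx : memFA p F x) : x = RT p F (fun i => x (r i)) := by
  have h := decomp x
  have h2 : SR p F (fun i => x (sr i)) = 0 := by
    rw [SR]
    refine Finset.sum_eq_zero fun i _ => ?_
    rw [memFA_sr_eq_zero hx, MonoidAlgebra.single_zero]
  rw [h2, add_zero] at h
  exact h

end S10
namespace S10
open DihedralGroup Finsupp
variable {p : ℕ} {F : Type} [Field F] [NeZero p]

lemma mem_oneGamma_of (x : FG p F) (h1 : ∑ i, x (r i) = 1) (h2 : ∑ i, x (sr i) = 0) :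
    x ∈ oneGamma p F := by
  show x - 1 ∈ gammaA p F
  have hr : RT p F (fun i => x (r i)) - 1 ∈ gammaA p F := by
    have key : RT p F (fun i => x (r i)) - 1
        = ∑ i : ZMod p, x (r i) • ((MonoidAlgebra.of F (Dg p) (r i)) - 1) := by
      simp only [smul_sub, Finset.sum_sub_distrib, ← Finset.sum_smul, h1, one_smul,
        MonoidAlgebra.of_apply, RT, MonoidAlgebra.smul_single', mul_one]
    rw [key]
    refine Ideal.sum_mem _ fun i _ => ?_
    rw [Algebra.smul_def]
    exact Ideal.mul_mem_left _ _ (Ideal.subset_span ⟨r i, r_mem_Asub i, rfl⟩)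
  have hs : SR p F (fun i => x (sr i)) ∈ gammaA p F := by
    have key : SR p F (fun i => x (sr i))
        = ∑ i : ZMod p, x (sr i) •
            (MonoidAlgebra.single (sr 0 : Dg p) (1 : F) *
              ((MonoidAlgebra.of F (Dg p) (r i)) - 1)) := by
      have : ∀ i : ZMod p, MonoidAlgebra.single (sr 0 : Dg p) (1 : F) *
          ((MonoidAlgebra.of F (Dg p) (r i)) - 1)
          = MonoidAlgebra.single (sr i : Dg p) (1 : F)
            - MonoidAlgebra.single (sr 0 : Dg p) (1 : F) := by
        intro i
        rw [MonoidAlgebra.of_apply, mul_sub, mul_one, MonoidAlgebra.single_mul_single,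
          one_mul, sr_mul_r, zero_add]
      simp only [this, smul_sub, Finset.sum_sub_distrib, ← Finset.sum_smul, h2, zero_smul,
        sub_zero, SR, MonoidAlgebra.smul_single', mul_one]
      rw [show ∑ i : ZMod p, MonoidAlgebra.single (sr 0 : Dg p) (x.coeff (sr i))
          = MonoidAlgebra.single (sr 0 : Dg p) (∑ i, x.coeff (sr i)) from
          (map_sum (MonoidAlgebra.singleAddHom (sr 0 : Dg p)) _ _).symm,
        h2, MonoidAlgebra.single_zero, sub_zero]
    rw [key]
    refine Ideal.sum_mem _ fun i _ => ?_
    rw [Algebra.smul_def]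
    refine Ideal.mul_mem_left _ _ (Ideal.mul_mem_left _ _
      (Ideal.subset_span ⟨r i, r_mem_Asub i, rfl⟩))
  have hx : x - 1 = (RT p F (fun i => x (r i)) - 1) + SR p F (fun i => x (sr i)) := by
    conv_lhs => rw [decomp x]
    abel
  rw [hx]
  exact add_mem hr hs

/-- the sign homomorphism to `C2`. -/
def sgn (p : ℕ) : Dg p →* Multiplicative (ZMod 2) :=
  MonoidHom.mk' (fun g => match g with
    | .r _ => 1
    | .sr _ => Multiplicative.ofAdd 1)
    (by rintro (i | i) (j | j) <;> simp <;> decide)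

lemma gammaA_le_ker :
    gammaA p F ≤ RingHom.ker (MonoidAlgebra.mapDomainRingHom F (sgn p)) := by
  rw [gammaA, Ideal.span_le]
  rintro _ ⟨h, hh, rfl⟩
  obtain ⟨k, rfl⟩ := Subgroup.mem_zpowers_iff.mp hh
  have hsgn : sgn p (aa p ^ k) = 1 := by
    rw [map_zpow]
    have : sgn p (aa p) = 1 := rfl
    rw [this, one_zpow]
  rw [SetLike.mem_coe, RingHom.mem_ker, map_sub, map_one, MonoidAlgebra.of_apply]
  have : MonoidAlgebra.mapDomainRingHom F (sgn p) (MonoidAlgebra.single (aa p ^ k) (1 : F))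
      = MonoidAlgebra.single (sgn p (aa p ^ k)) (1 : F) := MonoidAlgebra.mapDomain_single
  rw [this, hsgn, ← MonoidAlgebra.one_def, sub_self]

lemma oneGamma_coeffs {x : FG p F} (hx : x ∈ oneGamma p F) :
    ∑ i, x (r i) = 1 ∧ ∑ i, x (sr i) = 0 := by
  have h0 : MonoidAlgebra.mapDomainRingHom F (sgn p) x = 1 := by
    have h := gammaA_le_ker hx
    rw [RingHom.mem_ker, map_sub, map_one, sub_eq_zero] at h
    exact h
  have hπ : MonoidAlgebra.mapDomainRingHom F (sgn p) x
      = MonoidAlgebra.single (1 : Multiplicative (ZMod 2)) (∑ i, x (r i))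
        + MonoidAlgebra.single (Multiplicative.ofAdd (1 : ZMod 2)) (∑ i, x (sr i)) := by
    conv_lhs => rw [decomp x]
    rw [map_add]
    simp only [RT, SR, map_sum]
    have hr : ∀ i : ZMod p, MonoidAlgebra.mapDomainRingHom F (sgn p)
        (MonoidAlgebra.single (r i) (x (r i)))
        = MonoidAlgebra.single (1 : Multiplicative (ZMod 2)) (x (r i)) :=
      fun i => MonoidAlgebra.mapDomain_single
    have hsr : ∀ i : ZMod p, MonoidAlgebra.mapDomainRingHom F (sgn p)
        (MonoidAlgebra.single (sr i) (x (sr i)))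
        = MonoidAlgebra.single (Multiplicative.ofAdd (1 : ZMod 2)) (x (sr i)) :=
      fun i => MonoidAlgebra.mapDomain_single
    simp only [hr, hsr]
    congr 1 <;> exact (map_sum (MonoidAlgebra.singleAddHom _) _ _).symm
  rw [h0] at hπ
  have hne : ¬ (1 : Multiplicative (ZMod 2)) = Multiplicative.ofAdd (1 : ZMod 2) := by decide
  have hne' : ¬ (Multiplicative.ofAdd (1 : ZMod 2)) = (1 : Multiplicative (ZMod 2)) := by decide
  have e1 := congrArg (fun z : MonoidAlgebra F (Multiplicative (ZMod 2)) =>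
    z.coeff (1 : Multiplicative (ZMod 2))) hπ
  have e2 := congrArg (fun z : MonoidAlgebra F (Multiplicative (ZMod 2)) =>
    z.coeff (Multiplicative.ofAdd (1 : ZMod 2))) hπ
  rw [MonoidAlgebra.coeff_add, Finsupp.add_apply] at e1 e2
  simp only [MonoidAlgebra.one_def, MonoidAlgebra.coeff_single, Finsupp.single_apply, if_pos rfl, if_neg hne,
    if_neg hne', add_zero, zero_add] at e1 e2
  exact ⟨e1.symm, e2.symm⟩

end S10
namespace S10
open DihedralGroup Finsupp
variable {p : ℕ} {F : Type} [Field F] [NeZero p]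

lemma const_of_step (f : ZMod p → F) (h : ∀ i, f (i + 1) = f i) (i : ZMod p) : f i = f 0 := by
  have key : ∀ n : ℕ, f (n : ZMod p) = f 0 := by
    intro n
    induction n with
    | zero => simp
    | succ n ih => rw [← ih]; push_cast; exact h _
  have := key i.val
  rwa [ZMod.natCast_zmod_val] at this

lemma const_of_step2 (hp : p.Prime) (hodd : Odd p) (f : ZMod p → F)
    (h : ∀ i, f (i + 2) = f i) (i : ZMod p) : f i = f 0 := by
  haveI := Fact.mk hp
  have key : ∀ n : ℕ, f ((2 * n : ℕ) : ZMod p) = f 0 := by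
    intro n
    induction n with
    | zero => simp
    | succ n ih =>
        rw [← ih]
        push_cast
        have : (2 : ZMod p) * ((n : ZMod p) + 1) = 2 * n + 2 := by ring
        rw [this]
        exact h _
  have h2 : (2 : ZMod p) ≠ 0 := by
    have hne : p ≠ 2 := by
      rintro rfl
      exact (Nat.not_odd_iff_even.mpr even_two) hodd
    have : ¬ (p ∣ 2) := fun hd => hne ((Nat.prime_dvd_prime_iff_eq hp Nat.prime_two).mp hd)
    intro h0
    exact this (by rwa [show ((2 : ZMod p)) = ((2 : ℕ) : ZMod p) by push_cast; rfl,
      ZMod.natCast_eq_zero_iff] at h0)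
  set k := (2 : ZMod p)⁻¹ * i with hk
  have hik : i = ((2 * k.val : ℕ) : ZMod p) := by
    push_cast
    rw [ZMod.natCast_zmod_val, hk, ← mul_assoc, mul_inv_cancel₀ h2, one_mul]
  rw [hik]
  exact key k.val

lemma invo_RT (c : ZMod p → F) (hc : ∀ i, c (-i) = c i) :
    invo p F (RT p F c) = RT p F c := by
  ext g
  rw [invo_apply]
  rcases g with i | i
  · rw [inv_r, RT_apply_r, RT_apply_r, hc]
  · rw [inv_sr, RT_apply_sr]

/-- the embedding of the commutative group algebra of rotations. -/
def mh (p : ℕ) : Multiplicative (ZMod p) →* Dg p :=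
  MonoidHom.mk' (fun i => r i.toAdd) (by
    intro a b
    simp only [toAdd_mul, r_mul_r])

lemma isUnit_RT (hp : p.Prime) [CharP F p] (c : ZMod p → F) (hc : ∑ i, c i = 1) :
    IsUnit (RT p F c) := by
  haveI := Fact.mk hp
  have halg : Function.Injective (algebraMap F (MonoidAlgebra F (Multiplicative (ZMod p)))) := by
    intro a b hab
    have := congrArg (fun z : MonoidAlgebra F (Multiplicative (ZMod p)) =>
      z.coeff (1 : Multiplicative (ZMod p))) hab
    simpa [MonoidAlgebra.coe_algebraMap, Finsupp.single_apply] using this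
  haveI : CharP (MonoidAlgebra F (Multiplicative (ZMod p))) p :=
    charP_of_injective_algebraMap halg p
  set u : MonoidAlgebra F (Multiplicative (ZMod p)) := ∑ i : ZMod p, MonoidAlgebra.single (Multiplicative.ofAdd i) (c i) with hu
  have hnil : (u - 1) ^ p = 0 := by
    have key : u - 1 = ∑ i : ZMod p,
        c i • (MonoidAlgebra.single (Multiplicative.ofAdd i) (1 : F) - 1) := by
      simp only [smul_sub, Finset.sum_sub_distrib, ← Finset.sum_smul, hc, one_smul, hu,
        MonoidAlgebra.smul_single', mul_one]
    rw [key, sum_pow_char]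
    refine Finset.sum_eq_zero fun i _ => ?_
    rw [smul_pow, sub_pow_char, one_pow, MonoidAlgebra.single_pow, one_pow]
    have hord : (Multiplicative.ofAdd i) ^ p = 1 := by
      rw [← ofAdd_nsmul, nsmul_eq_mul, ZMod.natCast_self, zero_mul, ofAdd_zero]
    rw [hord, ← MonoidAlgebra.one_def, sub_self, smul_zero]
  have hunit : IsUnit u := by
    have : IsNilpotent (u - 1) := ⟨p, hnil⟩
    simpa using this.isUnit_one_add
  have himg : RT p F c = MonoidAlgebra.mapDomainRingHom F (mh p) u := by
    rw [hu, map_sum, RT]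
    refine Finset.sum_congr rfl fun i _ => ?_
    have : MonoidAlgebra.mapDomainRingHom F (mh p)
        (MonoidAlgebra.single (Multiplicative.ofAdd i) (c i))
        = MonoidAlgebra.single (mh p (Multiplicative.ofAdd i)) (c i) := MonoidAlgebra.mapDomain_single
    rw [this]
    rfl
  rw [himg]
  exact hunit.map _

end S10
namespace S10
open DihedralGroup Finsupp
variable {p : ℕ} {F : Type} [Field F] [NeZero p]

lemma SR_const (β : F) : SR p F (fun _ => β) = β • SR p F (fun _ => 1) := by
  simp only [SR, Finset.smul_sum, MonoidAlgebra.smul_single', mul_one]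

lemma RTplus_r (c : ZMod p → F) (β : F) (i : ZMod p) :
    (RT p F c + β • SR p F (fun _ => 1)) (r i) = c i := by
  rw [MonoidAlgebra.coeff_add, Finsupp.add_apply, MonoidAlgebra.coeff_smul, Finsupp.smul_apply, RT_apply_r, SR_apply_r, smul_zero, add_zero]

lemma RTplus_sr (c : ZMod p → F) (β : F) (i : ZMod p) :
    (RT p F c + β • SR p F (fun _ => 1)) (sr i) = β := by
  rw [MonoidAlgebra.coeff_add, Finsupp.add_apply, MonoidAlgebra.coeff_smul, Finsupp.smul_apply, RT_apply_sr, SR_apply_sr, smul_eq_mul, mul_one,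
    zero_add]

lemma one_apply_r (i : ZMod p) : (1 : FG p F) (r i) = if i = 0 then 1 else 0 := by
  rw [MonoidAlgebra.one_def, show (1 : Dg p) = r 0 from rfl, MonoidAlgebra.coeff_single,
    Finsupp.single_apply]
  simp [-r_zero, eq_comm]

lemma one_apply_sr (i : ZMod p) : (1 : FG p F) (sr i) = 0 := by
  rw [MonoidAlgebra.one_def, show (1 : Dg p) = r 0 from rfl, MonoidAlgebra.coeff_single,
    Finsupp.single_apply]
  simp [-r_zero]

lemma sum_one_r : ∑ i : ZMod p, (1 : FG p F) (r i) = 1 := by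
  simp only [one_apply_r]
  simp

lemma tcoeff_r (β : F) (i : ZMod p) :
    ((1 : FG p F) + β • SR p F (fun _ => 1)) (r i) = (1 : FG p F) (r i) := by
  rw [MonoidAlgebra.coeff_add, Finsupp.add_apply, MonoidAlgebra.coeff_smul, Finsupp.smul_apply, SR_apply_r, smul_zero, add_zero]

lemma tcoeff_sr (β : F) (i : ZMod p) :
    ((1 : FG p F) + β • SR p F (fun _ => 1)) (sr i) = β := by
  rw [MonoidAlgebra.coeff_add, Finsupp.add_apply, MonoidAlgebra.coeff_smul, Finsupp.smul_apply, SR_apply_sr, smul_eq_mul, mul_one, one_apply_sr,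
    zero_add]

lemma t_mem_oneGamma [CharP F p] (β : F) :
    (1 : FG p F) + β • SR p F (fun _ => 1) ∈ oneGamma p F := by
  refine mem_oneGamma_of _ ?_ ?_
  · simp only [tcoeff_r]
    exact sum_one_r
  · simp only [tcoeff_sr, Finset.sum_const, Finset.card_univ, ZMod.card, nsmul_eq_mul]
    rw [CharP.cast_eq_zero, zero_mul]

lemma one_mem_Sstar : (1 : FG p F) ∈ SstarFA p F := by
  refine ⟨?_, ?_, isUnit_one, ?_⟩
  · intro g hg
    rw [MonoidAlgebra.one_def, MonoidAlgebra.coeff_single] at hg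
    have := Finsupp.support_single_subset hg
    rw [Finset.mem_singleton] at this
    subst this
    exact one_mem _
  · rw [aug, MonoidAlgebra.one_def, MonoidAlgebra.coeff_single, Finsupp.sum_single_index rfl]
  · ext g
    rw [invo_apply]
    simp [MonoidAlgebra.one_def, MonoidAlgebra.coeff_single, Finsupp.single_apply, eq_comm,
      inv_eq_one]

end S10
section
open DihedralGroup
/-- `Z(1 + Γ(A))` is the internal direct product of `S_*(FA)` and
`1 + FÂb`: both are contained in the center, they commute elementwise, intersect
trivially, and every central element is uniquely a product of an element of `S_*(FA)`
with an element of `1 + FÂb`. -/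
theorem stmt10 (p : ℕ) (hp : p.Prime) (hodd : Odd p)
    (F : Type) [Field F] [Fintype F] [CharP F p] :
    SstarFA p F ⊆ Zcen p F ∧
    oneFAb p F ⊆ Zcen p F ∧
    (∀ s ∈ SstarFA p F, ∀ t ∈ oneFAb p F, s * t = t * s) ∧
    (∀ x ∈ Zcen p F, ∃! st : FG p F × FG p F,
      st.1 ∈ SstarFA p F ∧ st.2 ∈ oneFAb p F ∧ x = st.1 * st.2) ∧
    SstarFA p F ∩ oneFAb p F = {1} := by
  haveI : NeZero p := ⟨hp.ne_zero⟩
  refine ⟨?_, ?_, ?_, ?_, ?_⟩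
  · -- S_* ⊆ Z
    rintro s ⟨hmem, haug, -, hinvo⟩
    have hcsym : ∀ i : ZMod p, s (r (-i)) = s (r i) := by
      intro i
      have h := S10.app_congr hinvo (r i)
      rw [S10.invo_apply, S10.inv_r] at h
      exact h
    have hsRT : s = S10.RT p F (fun i => s (r i)) := S10.memFA_eq_RT hmem
    have hsum2 : ∑ i : ZMod p, s (sr i) = 0 :=
      Finset.sum_eq_zero fun i _ => S10.memFA_sr_eq_zero hmem i
    have hsum1 : ∑ i : ZMod p, s (r i) = 1 := by
      rw [S10.aug_eq, hsum2, add_zero] at haug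
      exact haug
    refine ⟨S10.mem_oneGamma_of s hsum1 hsum2, fun y _ => ?_⟩
    rw [hsRT]
    exact S10.symm_central _ hcsym y
  · -- 1 + FÂb ⊆ Z
    rintro t ⟨β, rfl⟩
    rw [S10.t_eq]
    refine ⟨S10.t_mem_oneGamma β, fun y _ => ?_⟩
    rw [add_mul, mul_add, one_mul, mul_one, Algebra.smul_mul_assoc, Algebra.mul_smul_comm,
      S10.SR_one_central]
  · -- elementwise commuting
    rintro s - t ⟨β, rfl⟩
    rw [S10.t_eq, mul_add, add_mul, mul_one, one_mul, Algebra.mul_smul_comm,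
      Algebra.smul_mul_assoc, S10.SR_one_central]
  · -- unique factorization
    rintro x ⟨hxG, hxc⟩
    obtain ⟨hsum1, hsum2⟩ := S10.oneGamma_coeffs hxG
    -- x commutes with a
    have hax : x * MonoidAlgebra.single (r 1 : Dg p) (1 : F)
        = MonoidAlgebra.single (r 1 : Dg p) (1 : F) * x := by
      have ha : MonoidAlgebra.of F (Dg p) (aa p) ∈ oneGamma p F := by
        show _ - 1 ∈ gammaA p F
        exact Ideal.subset_span ⟨aa p, Subgroup.mem_zpowers _, rfl⟩
      have h := hxc _ ha
      simpa [MonoidAlgebra.of_apply, aa] using h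
    have hd2 : ∀ i : ZMod p, x (sr (i + 2)) = x (sr i) := by
      intro i
      have h := S10.app_congr hax (sr (i + 1))
      rw [MonoidAlgebra.mul_single_apply, MonoidAlgebra.single_mul_apply, one_mul, mul_one,
        S10.inv_r, sr_mul_r, r_mul_sr] at h
      have e1 : i + 1 + -1 = i := by ring
      have e2 : i + 1 - -1 = i + 2 := by ring
      rw [e1, e2] at h
      exact h.symm
    have hdconst : ∀ i : ZMod p, x (sr i) = x (sr 0) :=
      S10.const_of_step2 hp hodd (fun i => x (sr i)) hd2
    -- x commutes with 1 + b(a-1)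
    have hw : x * (MonoidAlgebra.single (sr 1 : Dg p) (1 : F)
          - MonoidAlgebra.single (sr 0 : Dg p) (1 : F))
        = (MonoidAlgebra.single (sr 1 : Dg p) (1 : F)
          - MonoidAlgebra.single (sr 0 : Dg p) (1 : F)) * x := by
      have hkey : MonoidAlgebra.single (sr 0 : Dg p) (1 : F)
          * (MonoidAlgebra.of F (Dg p) (aa p) - 1)
          = MonoidAlgebra.single (sr 1 : Dg p) (1 : F)
            - MonoidAlgebra.single (sr 0 : Dg p) (1 : F) := by
        rw [MonoidAlgebra.of_apply, aa, mul_sub, mul_one, MonoidAlgebra.single_mul_single,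
          one_mul, sr_mul_r, zero_add]
      have hmem : (1 : FG p F) + (MonoidAlgebra.single (sr 1 : Dg p) (1 : F)
          - MonoidAlgebra.single (sr 0 : Dg p) (1 : F)) ∈ oneGamma p F := by
        show _ - 1 ∈ gammaA p F
        rw [add_sub_cancel_left, ← hkey]
        exact Ideal.mul_mem_left _ _
          (Ideal.subset_span ⟨aa p, Subgroup.mem_zpowers _, rfl⟩)
      have h := hxc _ hmem
      rw [mul_add, add_mul, mul_one, one_mul] at h
      exact add_left_cancel h
    have hcrel : ∀ k : ZMod p, x (r (1 - k)) - x (r (-k)) = x (r (k - 1)) - x (r k) := by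
      intro k
      rw [mul_sub, sub_mul] at hw
      have h := S10.app_congr hw (sr k)
      rw [MonoidAlgebra.coeff_sub, MonoidAlgebra.coeff_sub, Finsupp.sub_apply, Finsupp.sub_apply,
        MonoidAlgebra.mul_single_apply,
        MonoidAlgebra.mul_single_apply, MonoidAlgebra.single_mul_apply,
        MonoidAlgebra.single_mul_apply, one_mul, one_mul, mul_one, mul_one,
        S10.inv_sr, S10.inv_sr, sr_mul_sr, sr_mul_sr, sr_mul_sr, sr_mul_sr,
        zero_sub, sub_zero] at h
      exact h
    have hcsym : ∀ i : ZMod p, x (r (-i)) = x (r i) := by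
      have he : ∀ i : ZMod p,
          (fun j => x (r j) - x (r (-j))) (i + 1) = (fun j => x (r j) - x (r (-j))) i := by
        intro i
        have h := hcrel (i + 1)
        have e1 : (1 : ZMod p) - (i + 1) = -i := by ring
        have e2 : i + 1 - 1 = i := by ring
        rw [e1, e2] at h
        show x (r (i + 1)) - x (r (-(i + 1))) = x (r i) - x (r (-i))
        linear_combination h
      intro i
      have h := S10.const_of_step (fun j => x (r j) - x (r (-j))) he i
      simp only [neg_zero, sub_self] at h
      linear_combination -h
    -- the factorization
    have hxeq : x = S10.RT p F (fun i => x (r i)) + x (sr 0) • S10.SR p F (fun _ => 1) := by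
      conv_lhs => rw [S10.decomp x]
      congr 1
      rw [show (fun i => x (sr i)) = (fun _ : ZMod p => x (sr 0)) from funext hdconst,
        S10.SR_const]
    refine ⟨(S10.RT p F (fun i => x (r i)),
      1 + algebraMap F (FG p F) (x (sr 0)) * Ahat p F * MonoidAlgebra.of F (Dg p) (bb p)),
      ⟨?_, ⟨x (sr 0), rfl⟩, ?_⟩, ?_⟩
    · -- S_* membership
      refine ⟨?_, ?_, S10.isUnit_RT hp _ hsum1, S10.invo_RT _ hcsym⟩
      · intro g hg
        rcases g with i | i
        · exact S10.r_mem_Asub i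
        · rw [Finsupp.mem_support_iff, S10.RT_apply_sr] at hg
          exact absurd rfl hg
      · rw [S10.aug_eq]
        simp only [S10.RT_apply_r, S10.RT_apply_sr, Finset.sum_const_zero, add_zero]
        exact hsum1
    · -- x = s * t
      rw [S10.t_eq, mul_add, mul_one, Algebra.mul_smul_comm, S10.RT_mul_SR_one, hsum1,
        one_smul, ← hxeq]
    · -- uniqueness
      rintro ⟨s₁, t₁⟩ ⟨⟨hm₁, ha₁, -, -⟩, ⟨β₁, hb₁⟩, hx₁⟩
      have hs₁ : s₁ = S10.RT p F (fun i => s₁ (r i)) := S10.memFA_eq_RT hm₁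
      have hsum₁ : ∑ i : ZMod p, s₁ (r i) = 1 := by
        rw [S10.aug_eq, Finset.sum_eq_zero fun i _ => S10.memFA_sr_eq_zero hm₁ i,
          add_zero] at ha₁
        exact ha₁
      have hprod : x = S10.RT p F (fun i => s₁ (r i)) + β₁ • S10.SR p F (fun _ => 1) := by
        rw [hx₁, hb₁, S10.t_eq]
        conv_lhs => rw [hs₁]
        rw [mul_add, mul_one, Algebra.mul_smul_comm, S10.RT_mul_SR_one, hsum₁, one_smul]
      have heq := hxeq.symm.trans hprod
      have hβ : x (sr 0) = β₁ := by
        have h := S10.app_congr heq (sr 0)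
        rwa [S10.RTplus_sr, S10.RTplus_sr] at h
      have hcc : (fun i => s₁ (r i)) = (fun i => x (r i)) := by
        funext i
        have h := S10.app_congr heq (r i)
        rw [S10.RTplus_r, S10.RTplus_r] at h
        exact h.symm
      refine Prod.ext ?_ ?_
      · rw [hs₁, hcc]
      · rw [hb₁, hβ]
  · -- trivial intersection
    ext x
    simp only [Set.mem_inter_iff, Set.mem_singleton_iff]
    constructor
    · rintro ⟨⟨hm, -, -, -⟩, ⟨β, hβ⟩⟩
      rw [S10.t_eq] at hβ
      have h0 : β = 0 := by
        have h := S10.app_congr hβ (sr 0)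
        rw [S10.tcoeff_sr, S10.memFA_sr_eq_zero hm 0] at h
        exact h.symm
      rw [hβ, h0, zero_smul, add_zero]
    · rintro rfl
      exact ⟨S10.one_mem_Sstar, 0, by simp⟩

end
end
end
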